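/- arXiv:1405.2544 — 5 statements merged into one kernel-verified Lean document; each statement's English description precedes it below -/
import Mathlib

section
/- Let Λ = ℤv₁ ⊕ ℤv₂ ⊂ ℝ² be a lattice and let Φ : ℝ² → S³ ⊂ ℝ⁴ be a smooth Λ-periodic conformal immersion into S³ whose conformal factor e^λ is a constant function and whose mean curvature H is a constant function (a flat CMC torus). Then there exist constants Q₁, Q₂ ∈ ℝ such that H = 4 e^{−4λ}(Q₁ I⁰₁₁ − Q₂ I⁰₁₂) at every point of ℝ² and 4 e^{−2λ} √(Q₁² + Q₂²) < 1; that is, Φ satisfies the strictly elliptic conformally constrained minimal surface equation. -/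
noncomputable section

open Real MeasureTheory
open scoped ENNReal RealInnerProductSpace

/-- The plane `ℝ²`. -/
abbrev RR2 := ℝ × ℝ
/-- Euclidean `ℝ⁴`. -/
abbrev RR4 := EuclideanSpace ℝ (Fin 4)

/-- Partial derivative in the `x₁` direction of an `ℝ⁴`-valued map on `ℝ²`. -/
def d1 (f : RR2 → RR4) (x : RR2) : RR4 := fderiv ℝ f x (1, 0)
/-- Partial derivative in the `x₂` direction of an `ℝ⁴`-valued map on `ℝ²`. -/
def d2 (f : RR2 → RR4) (x : RR2) : RR4 := fderiv ℝ f x (0, 1)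
/-- Partial derivative in the `x₁` direction of a scalar map on `ℝ²`. -/
def d1s (f : RR2 → ℝ) (x : RR2) : ℝ := fderiv ℝ f x (1, 0)
/-- Partial derivative in the `x₂` direction of a scalar map on `ℝ²`. -/
def d2s (f : RR2 → ℝ) (x : RR2) : ℝ := fderiv ℝ f x (0, 1)

/-- Determinant of four vectors of `ℝ⁴`. -/
def det4 (a b c d : RR4) : ℝ :=
  Matrix.det (Matrix.of ![(fun i => a i), (fun i => b i), (fun i => c i), (fun i => d i)])

/-- `Φ : U → S³ ⊂ ℝ⁴` is a smooth conformal immersion into `S³` with conformal factor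
`e^lam` and (positively oriented) Gauss map `n`. -/
structure IsConformalImmersionS3 (U : Set RR2) (Φ : RR2 → RR4) (lam : RR2 → ℝ)
    (n : RR2 → RR4) : Prop where
  smooth_Phi : ContDiffOn ℝ (⊤ : ℕ∞) Φ U
  smooth_lam : ContDiffOn ℝ (⊤ : ℕ∞) lam U
  smooth_n : ContDiffOn ℝ (⊤ : ℕ∞) n U
  mem_sphere : ∀ x ∈ U, ‖Φ x‖ = 1
  conf_orth : ∀ x ∈ U, ⟪d1 Φ x, d2 Φ x⟫ = 0
  conf_norm1 : ∀ x ∈ U, ‖d1 Φ x‖ = exp (lam x)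
  conf_norm2 : ∀ x ∈ U, ‖d2 Φ x‖ = exp (lam x)
  n_norm : ∀ x ∈ U, ‖n x‖ = 1
  n_orth_Phi : ∀ x ∈ U, ⟪n x, Φ x⟫ = 0
  n_orth_d1 : ∀ x ∈ U, ⟪n x, d1 Φ x⟫ = 0
  n_orth_d2 : ∀ x ∈ U, ⟪n x, d2 Φ x⟫ = 0
  oriented : ∀ x ∈ U, 0 < det4 (Φ x) (d1 Φ x) (d2 Φ x) (n x)

/-- Second fundamental form coefficient `I₁₁ = n·∂²_{x₁x₁}Φ`. -/
def I11 (Φ n : RR2 → RR4) (x : RR2) : ℝ := ⟪n x, d1 (d1 Φ) x⟫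
/-- Second fundamental form coefficient `I₁₂ = n·∂²_{x₁x₂}Φ`. -/
def I12 (Φ n : RR2 → RR4) (x : RR2) : ℝ := ⟪n x, d2 (d1 Φ) x⟫
/-- Second fundamental form coefficient `I₂₂ = n·∂²_{x₂x₂}Φ`. -/
def I22 (Φ n : RR2 → RR4) (x : RR2) : ℝ := ⟪n x, d2 (d2 Φ) x⟫

/-- Mean curvature `H = (1/2) e^{-2λ} (I₁₁ + I₂₂)`. -/
def meanCurv (Φ : RR2 → RR4) (lam : RR2 → ℝ) (n : RR2 → RR4) (x : RR2) : ℝ :=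
  (1 / 2) * exp (-(2 * lam x)) * (I11 Φ n x + I22 Φ n x)

/-- Trace-free Weingarten coefficient `I⁰₁₁ = (I₁₁ - I₂₂)/2`. -/
def I011 (Φ n : RR2 → RR4) (x : RR2) : ℝ := (I11 Φ n x - I22 Φ n x) / 2
/-- Trace-free Weingarten coefficient `I⁰₁₂ = I₁₂`. -/
def I012 (Φ n : RR2 → RR4) (x : RR2) : ℝ := I12 Φ n x

/-! ### Auxiliary lemmas -/

lemma one_le_inf : (1 : WithTop ℕ∞) ≤ ((⊤:ℕ∞) : WithTop ℕ∞) := by exact_mod_cast le_top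
lemma two_le_inf : (2 : WithTop ℕ∞) ≤ ((⊤:ℕ∞) : WithTop ℕ∞) := by
  have : ((2:ℕ∞) : WithTop ℕ∞) ≤ ((⊤:ℕ∞) : WithTop ℕ∞) := by exact_mod_cast le_top
  simpa using this
lemma infp1_le_inf : ((⊤:ℕ∞) : WithTop ℕ∞) + 1 ≤ ((⊤:ℕ∞) : WithTop ℕ∞) := by
  exact_mod_cast le_top

lemma contDiff_dv {f : RR2 → RR4} (hf : ContDiff ℝ (⊤:ℕ∞) f) (v : RR2) :
    ContDiff ℝ (⊤:ℕ∞) (fun x => fderiv ℝ f x v) :=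
  (hf.fderiv_right infp1_le_inf).clm_apply contDiff_const

lemma contDiff_d1 {f : RR2 → RR4} (hf : ContDiff ℝ (⊤:ℕ∞) f) : ContDiff ℝ (⊤:ℕ∞) (d1 f) :=
  contDiff_dv hf _
lemma contDiff_d2 {f : RR2 → RR4} (hf : ContDiff ℝ (⊤:ℕ∞) f) : ContDiff ℝ (⊤:ℕ∞) (d2 f) :=
  contDiff_dv hf _

lemma diff_of_smooth {f : RR2 → RR4} (hf : ContDiff ℝ (⊤:ℕ∞) f) : Differentiable ℝ f :=
  hf.differentiable (by simp)

lemma d1s_inner {f g : RR2 → RR4} (hf : ContDiff ℝ (⊤:ℕ∞) f) (hg : ContDiff ℝ (⊤:ℕ∞) g) (x : RR2) :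
    d1s (fun y => ⟪f y, g y⟫) x = ⟪f x, d1 g x⟫ + ⟪d1 f x, g x⟫ :=
  fderiv_inner_apply ℝ (diff_of_smooth hf x) (diff_of_smooth hg x) _

lemma d2s_inner {f g : RR2 → RR4} (hf : ContDiff ℝ (⊤:ℕ∞) f) (hg : ContDiff ℝ (⊤:ℕ∞) g) (x : RR2) :
    d2s (fun y => ⟪f y, g y⟫) x = ⟪f x, d2 g x⟫ + ⟪d2 f x, g x⟫ :=
  fderiv_inner_apply ℝ (diff_of_smooth hf x) (diff_of_smooth hg x) _

lemma d1s_const {f : RR2 → ℝ} {c : ℝ} (h : ∀ y, f y = c) (x : RR2) : d1s f x = 0 := by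
  have : f = fun _ => c := funext h
  rw [d1s, this, fderiv_fun_const]; simp

lemma d2s_const {f : RR2 → ℝ} {c : ℝ} (h : ∀ y, f y = c) (x : RR2) : d2s f x = 0 := by
  have : f = fun _ => c := funext h
  rw [d2s, this, fderiv_fun_const]; simp

lemma d_comm {f : RR2 → RR4} (hf : ContDiff ℝ (⊤:ℕ∞) f) (x : RR2) :
    d1 (d2 f) x = d2 (d1 f) x := by
  have hdf : Differentiable ℝ (fderiv ℝ f) :=
    (hf.fderiv_right infp1_le_inf).differentiable (by simp)
  have h1 : ∀ v w : RR2, fderiv ℝ (fun y => fderiv ℝ f y v) x w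
      = fderiv ℝ (fderiv ℝ f) x w v := by
    intro v w
    rw [fderiv_clm_apply (hdf x) (differentiableAt_const v)]
    simp
  have hsymm := (hf.contDiffAt (x := x)).isSymmSndFDerivAt (by rw [minSmoothness_of_isRCLikeNormedField]; exact two_le_inf)
  show fderiv ℝ (fun y => fderiv ℝ f y (0,1)) x (1,0)
      = fderiv ℝ (fun y => fderiv ℝ f y (1,0)) x (0,1)
  rw [h1, h1]
  exact hsymm _ _

/-- A vector orthogonal to two of the members of an orthonormal 4-frame is the sum of its
projections onto the other two. -/
lemma frame_decomp (e0 e1 e2 e3 v : RR4)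
    (h00 : ⟪e0,e0⟫ = 1) (h11 : ⟪e1,e1⟫ = 1) (h22 : ⟪e2,e2⟫ = 1) (h33 : ⟪e3,e3⟫ = 1)
    (h01 : ⟪e0,e1⟫ = 0) (h02 : ⟪e0,e2⟫ = 0) (h03 : ⟪e0,e3⟫ = 0)
    (h12 : ⟪e1,e2⟫ = 0) (h13 : ⟪e1,e3⟫ = 0) (h23 : ⟪e2,e3⟫ = 0)
    (hv1 : ⟪v,e1⟫ = 0) (hv2 : ⟪v,e2⟫ = 0) :
    v = ⟪v,e0⟫ • e0 + ⟪v,e3⟫ • e3 := by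
  set w : RR4 := v - ⟪v,e0⟫ • e0 - ⟪v,e3⟫ • e3 with hw
  have n0 : ‖e0‖ = 1 := by have := real_inner_self_eq_norm_sq e0; nlinarith [norm_nonneg e0]
  have n1 : ‖e1‖ = 1 := by have := real_inner_self_eq_norm_sq e1; nlinarith [norm_nonneg e1]
  have n2 : ‖e2‖ = 1 := by have := real_inner_self_eq_norm_sq e2; nlinarith [norm_nonneg e2]
  have n3 : ‖e3‖ = 1 := by have := real_inner_self_eq_norm_sq e3; nlinarith [norm_nonneg e3]
  have hinner : ∀ i : Fin 4, ⟪(![e0,e1,e2,e3] : Fin 4 → RR4) i, w⟫ = 0 := by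
    intro i
    fin_cases i <;>
      simp [hw, inner_sub_right, inner_smul_right, real_inner_comm v e0, real_inner_comm v e3,
        h00, h11, h22, h33, h01, h02, h03, h12, h13, h23,
        real_inner_comm e0 e1, real_inner_comm e0 e2, real_inner_comm e0 e3,
        real_inner_comm e1 e2, real_inner_comm e1 e3, real_inner_comm e2 e3, hv1, hv2,
        real_inner_comm v e1, real_inner_comm v e2, n0, n1, n2, n3]
  have horth : Orthonormal ℝ (![e0,e1,e2,e3] : Fin 4 → RR4) := by
    rw [orthonormal_iff_ite]
    intro i j
    fin_cases i <;> fin_cases j <;>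
      simp [h00, h11, h22, h33, h01, h02, h03, h12, h13, h23,
        real_inner_comm e0 e1, real_inner_comm e0 e2, real_inner_comm e0 e3,
        real_inner_comm e1 e2, real_inner_comm e1 e3, real_inner_comm e2 e3, n0, n1, n2, n3]
  have hspan : Submodule.span ℝ (Set.range (![e0,e1,e2,e3] : Fin 4 → RR4)) = ⊤ := by
    apply horth.linearIndependent.span_eq_top_of_card_eq_finrank
    simp [finrank_euclideanSpace]
  have hle : Submodule.span ℝ (Set.range (![e0,e1,e2,e3] : Fin 4 → RR4)) ≤ (ℝ ∙ w)ᗮ := by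
    rw [Submodule.span_le]
    rintro u ⟨i, rfl⟩
    rw [SetLike.mem_coe, Submodule.mem_orthogonal_singleton_iff_inner_left]
    exact hinner i
  have hw0 : w = 0 := by
    have : w ∈ (ℝ ∙ w)ᗮ := hle (hspan ▸ Submodule.mem_top)
    exact inner_self_eq_zero.1 (Submodule.mem_orthogonal_singleton_iff_inner_left.1 this)
  rw [hw, sub_sub, sub_eq_zero] at hw0
  exact hw0

/-- A flat CMC torus in `S³` (a smooth doubly periodic conformal immersion
whose conformal factor and mean curvature are constant) satisfies the strictly elliptic
conformally constrained minimal surface equation: there are constants `Q₁, Q₂` with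
`H = 4 e^{-4λ}(Q₁ I⁰₁₁ - Q₂ I⁰₁₂)` and `4 e^{-2λ} √(Q₁² + Q₂²) < 1` everywhere. -/
theorem flat_cmc_torus_strictly_elliptic
    (v₁ v₂ : RR2) (hv : LinearIndependent ℝ ![v₁, v₂])
    (Φ : RR2 → RR4) (lam : RR2 → ℝ) (n : RR2 → RR4)
    (h : IsConformalImmersionS3 Set.univ Φ lam n)
    (hper : ∀ (x : RR2) (m k : ℤ), Φ (x + m • v₁ + k • v₂) = Φ x)
    (hlam : ∀ x y : RR2, lam x = lam y)
    (hH : ∀ x y : RR2, meanCurv Φ lam n x = meanCurv Φ lam n y) :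
    ∃ Q₁ Q₂ : ℝ, ∀ x : RR2,
      meanCurv Φ lam n x
        = 4 * exp (-(4 * lam x)) * (Q₁ * I011 Φ n x - Q₂ * I012 Φ n x) ∧
      4 * exp (-(2 * lam x)) * Real.sqrt (Q₁ ^ 2 + Q₂ ^ 2) < 1 := by
  -- smoothness
  have hΦ : ContDiff ℝ (⊤:ℕ∞) Φ := contDiffOn_univ.1 h.smooth_Phi
  have hn : ContDiff ℝ (⊤:ℕ∞) n := contDiffOn_univ.1 h.smooth_n
  have hP1 := contDiff_d1 hΦ
  have hP2 := contDiff_d2 hΦ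
  have hP11 := contDiff_d1 hP1
  have hP12 := contDiff_d2 hP1
  have hP22 := contDiff_d2 hP2
  -- constants
  set l0 := lam 0 with hl0def
  have hlamx : ∀ x, lam x = l0 := fun x => hlam x 0
  set H0 := meanCurv Φ lam n 0 with hH0def
  have hH0 : ∀ x, meanCurv Φ lam n x = H0 := fun x => hH x 0
  set c1 : ℝ := exp l0 * exp l0 with hc1def
  have hc1pos : 0 < c1 := mul_pos (exp_pos _) (exp_pos _)
  have hexpne : exp l0 ≠ 0 := (exp_pos _).ne'
  -- pointwise inner product identities
  have iPP : ∀ x, ⟪Φ x, Φ x⟫ = 1 := by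
    intro x
    rw [real_inner_self_eq_norm_sq, h.mem_sphere x trivial]; norm_num
  have i11 : ∀ x, ⟪d1 Φ x, d1 Φ x⟫ = c1 := by
    intro x
    rw [real_inner_self_eq_norm_mul_norm, h.conf_norm1 x trivial, hlamx]
  have i22 : ∀ x, ⟪d2 Φ x, d2 Φ x⟫ = c1 := by
    intro x
    rw [real_inner_self_eq_norm_mul_norm, h.conf_norm2 x trivial, hlamx]
  have i12 : ∀ x, ⟪d1 Φ x, d2 Φ x⟫ = 0 := fun x => h.conf_orth x trivial
  have inn : ∀ x, ⟪n x, n x⟫ = 1 := by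
    intro x
    rw [real_inner_self_eq_norm_sq, h.n_norm x trivial]; norm_num
  have inΦ : ∀ x, ⟪n x, Φ x⟫ = 0 := fun x => h.n_orth_Phi x trivial
  have in1 : ∀ x, ⟪n x, d1 Φ x⟫ = 0 := fun x => h.n_orth_d1 x trivial
  have in2 : ∀ x, ⟪n x, d2 Φ x⟫ = 0 := fun x => h.n_orth_d2 x trivial
  -- first derivatives of |Φ|² = 1
  have iΦ1 : ∀ x, ⟪Φ x, d1 Φ x⟫ = 0 := by
    intro x
    have h0 := d1s_const (f := fun y => ⟪Φ y, Φ y⟫) iPP x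
    rw [d1s_inner hΦ hΦ x] at h0
    have := real_inner_comm (Φ x) (d1 Φ x)
    linarith [h0]
  have iΦ2 : ∀ x, ⟪Φ x, d2 Φ x⟫ = 0 := by
    intro x
    have h0 := d2s_const (f := fun y => ⟪Φ y, Φ y⟫) iPP x
    rw [d2s_inner hΦ hΦ x] at h0
    have := real_inner_comm (Φ x) (d2 Φ x)
    linarith [h0]
  -- second derivatives against Φ
  have iΦ11 : ∀ x, ⟪Φ x, d1 (d1 Φ) x⟫ = -c1 := by
    intro x
    have h0 := d1s_const (f := fun y => ⟪Φ y, d1 Φ y⟫) iΦ1 x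
    rw [d1s_inner hΦ hP1 x] at h0
    have := real_inner_comm (d1 Φ x) (d1 Φ x)
    have h1 := i11 x
    linarith [h0]
  have iΦ12 : ∀ x, ⟪Φ x, d2 (d1 Φ) x⟫ = 0 := by
    intro x
    have h0 := d2s_const (f := fun y => ⟪Φ y, d1 Φ y⟫) iΦ1 x
    rw [d2s_inner hΦ hP1 x] at h0
    have h1 := real_inner_comm (d2 Φ x) (d1 Φ x)
    have h2 := i12 x
    linarith [h0]
  have iΦ22 : ∀ x, ⟪Φ x, d2 (d2 Φ) x⟫ = -c1 := by
    intro x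
    have h0 := d2s_const (f := fun y => ⟪Φ y, d2 Φ y⟫) iΦ2 x
    rw [d2s_inner hΦ hP2 x] at h0
    have h1 := i22 x
    linarith [h0]
  -- metric derivative identities
  have A11 : ∀ x, ⟪d1 Φ x, d1 (d1 Φ) x⟫ = 0 := by
    intro x
    have h0 := d1s_const (f := fun y => ⟪d1 Φ y, d1 Φ y⟫) i11 x
    rw [d1s_inner hP1 hP1 x] at h0
    have := real_inner_comm (d1 (d1 Φ) x) (d1 Φ x)
    linarith [h0]
  have A12 : ∀ x, ⟪d1 Φ x, d2 (d1 Φ) x⟫ = 0 := by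
    intro x
    have h0 := d2s_const (f := fun y => ⟪d1 Φ y, d1 Φ y⟫) i11 x
    rw [d2s_inner hP1 hP1 x] at h0
    have := real_inner_comm (d2 (d1 Φ) x) (d1 Φ x)
    linarith [h0]
  have B21 : ∀ x, ⟪d2 Φ x, d1 (d2 Φ) x⟫ = 0 := by
    intro x
    have h0 := d1s_const (f := fun y => ⟪d2 Φ y, d2 Φ y⟫) i22 x
    rw [d1s_inner hP2 hP2 x] at h0
    have := real_inner_comm (d1 (d2 Φ) x) (d2 Φ x)
    linarith [h0]
  have B22 : ∀ x, ⟪d2 Φ x, d2 (d2 Φ) x⟫ = 0 := by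
    intro x
    have h0 := d2s_const (f := fun y => ⟪d2 Φ y, d2 Φ y⟫) i22 x
    rw [d2s_inner hP2 hP2 x] at h0
    have := real_inner_comm (d2 (d2 Φ) x) (d2 Φ x)
    linarith [h0]
  have hsymm : ∀ x, d1 (d2 Φ) x = d2 (d1 Φ) x := d_comm hΦ
  have C11 : ∀ x, ⟪d2 Φ x, d1 (d1 Φ) x⟫ = 0 := by
    intro x
    have h0 := d1s_const (f := fun y => ⟪d1 Φ y, d2 Φ y⟫) i12 x
    rw [d1s_inner hP1 hP2 x] at h0
    have h1 : ⟪d1 Φ x, d1 (d2 Φ) x⟫ = 0 := by rw [hsymm x]; exact A12 x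
    have h2 := real_inner_comm (d1 (d1 Φ) x) (d2 Φ x)
    linarith [h0]
  have C22 : ∀ x, ⟪d1 Φ x, d2 (d2 Φ) x⟫ = 0 := by
    intro x
    have h0 := d2s_const (f := fun y => ⟪d1 Φ y, d2 Φ y⟫) i12 x
    rw [d2s_inner hP1 hP2 x] at h0
    have h1 : ⟪d2 (d1 Φ) x, d2 Φ x⟫ = 0 := by
      rw [← hsymm x]; rw [real_inner_comm]; exact B21 x
    linarith [h0]
  -- derivatives of the Gauss map
  have inn1 : ∀ x, ⟪n x, d1 n x⟫ = 0 := by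
    intro x
    have h0 := d1s_const (f := fun y => ⟪n y, n y⟫) inn x
    rw [d1s_inner hn hn x] at h0
    have := real_inner_comm (d1 n x) (n x)
    linarith [h0]
  have inn2 : ∀ x, ⟪n x, d2 n x⟫ = 0 := by
    intro x
    have h0 := d2s_const (f := fun y => ⟪n y, n y⟫) inn x
    rw [d2s_inner hn hn x] at h0
    have := real_inner_comm (d2 n x) (n x)
    linarith [h0]
  have inΦ1 : ∀ x, ⟪Φ x, d1 n x⟫ = 0 := by
    intro x
    have h0 := d1s_const (f := fun y => ⟪n y, Φ y⟫) inΦ x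
    rw [d1s_inner hn hΦ x] at h0
    have h1 : ⟪d1 n x, Φ x⟫ = - ⟪n x, d1 Φ x⟫ := by linarith [h0]
    rw [real_inner_comm, h1, in1 x, neg_zero]
  have inΦ2 : ∀ x, ⟪Φ x, d2 n x⟫ = 0 := by
    intro x
    have h0 := d2s_const (f := fun y => ⟪n y, Φ y⟫) inΦ x
    rw [d2s_inner hn hΦ x] at h0
    have h1 : ⟪d2 n x, Φ x⟫ = - ⟪n x, d2 Φ x⟫ := by linarith [h0]
    rw [real_inner_comm, h1, in2 x, neg_zero]
  -- frame decompositions of the second derivatives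
  have hframe : ∀ (x : RR2) (v : RR4), ⟪v, d1 Φ x⟫ = 0 → ⟪v, d2 Φ x⟫ = 0 →
      v = ⟪v, Φ x⟫ • Φ x + ⟪v, n x⟫ • n x := by
    intro x v hv1 hv2
    have hd := frame_decomp (Φ x) ((exp l0)⁻¹ • d1 Φ x) ((exp l0)⁻¹ • d2 Φ x) (n x) v
      (iPP x) ?_ ?_ (inn x) ?_ ?_ ?_ ?_ ?_ ?_ ?_ ?_
    · exact hd
    · rw [real_inner_smul_left, real_inner_smul_right, i11 x]
      field_simp [hc1def]
      rw [hc1def]; ring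
    · rw [real_inner_smul_left, real_inner_smul_right, i22 x]
      field_simp [hc1def]
      rw [hc1def]; ring
    · rw [real_inner_smul_right, iΦ1 x, mul_zero]
    · rw [real_inner_smul_right, iΦ2 x, mul_zero]
    · rw [real_inner_comm, inΦ x]
    · rw [real_inner_smul_left, real_inner_smul_right, i12 x]; ring
    · rw [real_inner_smul_left, real_inner_comm, in1 x]; ring
    · rw [real_inner_smul_left, real_inner_comm, in2 x]; ring
    · rw [real_inner_smul_right, hv1, mul_zero]
    · rw [real_inner_smul_right, hv2, mul_zero]
  have E11 : ∀ x, d1 (d1 Φ) x = (-c1) • Φ x + I11 Φ n x • n x := by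
    intro x
    have hd := hframe x (d1 (d1 Φ) x)
      (by rw [real_inner_comm]; exact A11 x) (by rw [real_inner_comm]; exact C11 x)
    rw [hd, real_inner_comm (Φ x) (d1 (d1 Φ) x), iΦ11 x,
      real_inner_comm (n x) (d1 (d1 Φ) x)]
    rfl
  have E12 : ∀ x, d2 (d1 Φ) x = I12 Φ n x • n x := by
    intro x
    have hd := hframe x (d2 (d1 Φ) x)
      (by rw [real_inner_comm]; exact A12 x)
      (by rw [← hsymm x, real_inner_comm]; exact B21 x)
    rw [hd, real_inner_comm (Φ x) (d2 (d1 Φ) x), iΦ12 x,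
      real_inner_comm (n x) (d2 (d1 Φ) x)]
    simp [I12]
  have E22 : ∀ x, d2 (d2 Φ) x = (-c1) • Φ x + I22 Φ n x • n x := by
    intro x
    have hd := hframe x (d2 (d2 Φ) x)
      (by rw [real_inner_comm]; exact C22 x) (by rw [real_inner_comm]; exact B22 x)
    rw [hd, real_inner_comm (Φ x) (d2 (d2 Φ) x), iΦ22 x,
      real_inner_comm (n x) (d2 (d2 Φ) x)]
    rfl
  -- Gauss equation
  have G1 : ∀ x, ⟪d1 (d1 Φ) x, d2 (d2 Φ) x⟫ = ⟪d2 (d1 Φ) x, d2 (d1 Φ) x⟫ := by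
    intro x
    have h1 := d2s_inner hP11 hP2 x
    have h1' : d2s (fun y => ⟪d1 (d1 Φ) y, d2 Φ y⟫) x = 0 :=
      d2s_const (fun y => by rw [real_inner_comm]; exact C11 y) x
    have h2 := d1s_inner hP12 hP2 x
    have h2' : d1s (fun y => ⟪d2 (d1 Φ) y, d2 Φ y⟫) x = 0 :=
      d1s_const (fun y => by rw [← hsymm y, real_inner_comm]; exact B21 y) x
    have h3 : d1 (d2 (d1 Φ)) x = d2 (d1 (d1 Φ)) x := d_comm hP1 x
    rw [h1'] at h1
    rw [h2'] at h2
    rw [h3] at h2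
    have h4 : ⟪d2 (d1 Φ) x, d1 (d2 Φ) x⟫ = ⟪d2 (d1 Φ) x, d2 (d1 Φ) x⟫ := by rw [hsymm x]
    rw [h4] at h2
    linarith [h1, h2]
  have Gauss : ∀ x, c1 * c1 + I11 Φ n x * I22 Φ n x = I12 Φ n x ^ 2 := by
    intro x
    have hg := G1 x
    rw [E11 x, E22 x, E12 x] at hg
    simp only [inner_add_left, inner_add_right, real_inner_smul_left, real_inner_smul_right,
      iPP x, inn x, inΦ x] at hg
    rw [real_inner_comm (n x) (Φ x), inΦ x] at hg
    ring_nf at hg ⊢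
    nlinarith [hg]
  -- Codazzi equations
  have Cod1 : ∀ x, d2s (I11 Φ n) x = d1s (I12 Φ n) x := by
    intro x
    have h1 := d2s_inner hn hP11 x
    have h2 := d1s_inner hn hP12 x
    have e1 : ⟪d2 n x, d1 (d1 Φ) x⟫ = 0 := by
      rw [E11 x]
      rw [inner_add_right, real_inner_smul_right, real_inner_smul_right,
        real_inner_comm (Φ x) (d2 n x), inΦ2 x, real_inner_comm (n x) (d2 n x), inn2 x]
      ring
    have e2 : ⟪d1 n x, d2 (d1 Φ) x⟫ = 0 := by
      rw [E12 x, real_inner_smul_right, real_inner_comm (n x) (d1 n x), inn1 x]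
      ring
    have h3 : d1 (d2 (d1 Φ)) x = d2 (d1 (d1 Φ)) x := d_comm hP1 x
    have hI11e : I11 Φ n = fun y => ⟪n y, d1 (d1 Φ) y⟫ := rfl
    have hI12e : I12 Φ n = fun y => ⟪n y, d2 (d1 Φ) y⟫ := rfl
    rw [hI11e, hI12e, h1, h2, h3, e1, e2]
  have Cod2 : ∀ x, d1s (I22 Φ n) x = d2s (I12 Φ n) x := by
    intro x
    have h1 := d1s_inner hn hP22 x
    have h2 := d2s_inner hn hP12 x
    have e1 : ⟪d1 n x, d2 (d2 Φ) x⟫ = 0 := by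
      rw [E22 x]
      rw [inner_add_right, real_inner_smul_right, real_inner_smul_right,
        real_inner_comm (Φ x) (d1 n x), inΦ1 x, real_inner_comm (n x) (d1 n x), inn1 x]
      ring
    have e2 : ⟪d2 n x, d2 (d1 Φ) x⟫ = 0 := by
      rw [E12 x, real_inner_smul_right, real_inner_comm (n x) (d2 n x), inn2 x]
      ring
    have h3 : d2 (d2 (d1 Φ)) x = d1 (d2 (d2 Φ)) x := by
      have hf : d2 (d1 Φ) = d1 (d2 Φ) := funext fun y => (hsymm y).symm
      rw [hf]
      exact (d_comm hP2 x).symm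
    have hI22e : I22 Φ n = fun y => ⟪n y, d2 (d2 Φ) y⟫ := rfl
    have hI12e : I12 Φ n = fun y => ⟪n y, d2 (d1 Φ) y⟫ := rfl
    rw [hI22e, hI12e, h1, h2, h3, e1, e2]
  -- constancy of the mean curvature: sum identity
  have hsum : ∀ x, I11 Φ n x + I22 Φ n x = 2 * H0 * c1 := by
    intro x
    have hx := hH0 x
    rw [meanCurv, hlamx x] at hx
    have he : exp (-(2 * l0)) = c1⁻¹ := by
      rw [hc1def, ← exp_add, ← exp_neg]
      ring_nf
    rw [he] at hx
    field_simp at hx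
    linarith [hx]
  -- smoothness of the fundamental form coefficients
  have hI11s : ContDiff ℝ (⊤:ℕ∞) (I11 Φ n) := ContDiff.inner ℝ hn hP11
  have hI12s : ContDiff ℝ (⊤:ℕ∞) (I12 Φ n) := ContDiff.inner ℝ hn hP12
  have hI22s : ContDiff ℝ (⊤:ℕ∞) (I22 Φ n) := ContDiff.inner ℝ hn hP22
  have hI11d : Differentiable ℝ (I11 Φ n) := hI11s.differentiable (by simp)
  have hI12d : Differentiable ℝ (I12 Φ n) := hI12s.differentiable (by simp)
  have hI22d : Differentiable ℝ (I22 Φ n) := hI22s.differentiable (by simp)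
  -- derivative of the (constant) trace
  have hs : ∀ (x : RR2) (v : RR2), fderiv ℝ (I11 Φ n) x v + fderiv ℝ (I22 Φ n) x v = 0 := by
    intro x v
    have hc : (fun y => I11 Φ n y + I22 Φ n y) = fun _ => 2 * H0 * c1 := funext hsum
    have hd : fderiv ℝ (fun y => I11 Φ n y + I22 Φ n y) x = 0 := by
      rw [hc]; exact fderiv_const_apply _
    rw [fderiv_fun_add (hI11d x) (hI22d x)] at hd
    have h2 : (fderiv ℝ (I11 Φ n) x + fderiv ℝ (I22 Φ n) x) v = (0 : RR2 →L[ℝ] ℝ) v := by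
      rw [hd]
    simpa using h2
  -- trace-free coefficients: a = I011, b = I012
  have hI011d : Differentiable ℝ (I011 Φ n) := by
    have : I011 Φ n = fun y => (I11 Φ n y - I22 Φ n y) / 2 := rfl
    rw [this]
    have h2 : Differentiable ℝ fun y => (1/2 : ℝ) * (I11 Φ n y - I22 Φ n y) :=
      (hI11d.sub hI22d).const_mul _
    convert h2 using 2 with y
    ring
  have hI012d : Differentiable ℝ (I012 Φ n) := hI12d
  have dI011 : ∀ (x v : RR2),
      fderiv ℝ (I011 Φ n) x v = fderiv ℝ (I11 Φ n) x v := by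
    intro x v
    have he : I011 Φ n = fun y => (1/2 : ℝ) * (I11 Φ n y - I22 Φ n y) := by
      funext y; rw [I011]; ring
    rw [he, fderiv_const_mul (by exact (hI11d x).sub (hI22d x)), fderiv_fun_sub (hI11d x) (hI22d x)]
    have h2 := hs x v
    simp only [ContinuousLinearMap.coe_smul', Pi.smul_apply, ContinuousLinearMap.coe_sub',
      Pi.sub_apply, smul_eq_mul]
    linarith [h2]
  have dI012 : ∀ (x v : RR2), fderiv ℝ (I012 Φ n) x v = fderiv ℝ (I12 Φ n) x v := by
    intro x v; rfl
  -- Cauchy–Riemann equations for (a, -b)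
  have CR1 : ∀ x, d1s (I011 Φ n) x = - d2s (I012 Φ n) x := by
    intro x
    have h1 : d1s (I011 Φ n) x = d1s (I11 Φ n) x := dI011 x _
    have h2 : d2s (I012 Φ n) x = d2s (I12 Φ n) x := dI012 x _
    have h3 : d1s (I11 Φ n) x = - d1s (I22 Φ n) x := by
      have := hs x (1,0); unfold d1s; linarith [this]
    rw [h1, h2, h3, Cod2 x]
  have CR2 : ∀ x, d2s (I011 Φ n) x = d1s (I012 Φ n) x := by
    intro x
    have h1 : d2s (I011 Φ n) x = d2s (I11 Φ n) x := dI011 x _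
    have h2 : d1s (I012 Φ n) x = d1s (I12 Φ n) x := dI012 x _
    rw [h1, h2, Cod1 x]
  -- Gauss equation in terms of a, b
  have habsq : ∀ x, I011 Φ n x ^ 2 + I012 Φ n x ^ 2 = c1 * c1 + (H0 * c1) ^ 2 := by
    intro x
    have hg := Gauss x
    have hsx := hsum x
    have ha : I011 Φ n x = (I11 Φ n x - I22 Φ n x) / 2 := rfl
    have hb : I012 Φ n x = I12 Φ n x := rfl
    rw [ha, hb]
    linear_combination (-1 : ℝ) * hg + ((I11 Φ n x + I22 Φ n x) / 4 + H0 * c1 / 2) * hsx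
  -- the derivative of a² + b² vanishes
  have habd : ∀ (x v : RR2),
      I011 Φ n x * fderiv ℝ (I011 Φ n) x v + I012 Φ n x * fderiv ℝ (I012 Φ n) x v = 0 := by
    intro x v
    have hc : (fun y => I011 Φ n y * I011 Φ n y + I012 Φ n y * I012 Φ n y)
        = fun _ => c1 * c1 + (H0 * c1) ^ 2 := by
      funext y
      have := habsq y
      linear_combination this
    have hd : fderiv ℝ (fun y => I011 Φ n y * I011 Φ n y + I012 Φ n y * I012 Φ n y) x = 0 := by
      rw [hc]; exact fderiv_const_apply _
    rw [fderiv_fun_add ((hI011d x).fun_mul (hI011d x)) ((hI012d x).fun_mul (hI012d x)),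
      fderiv_fun_mul (hI011d x) (hI011d x), fderiv_fun_mul (hI012d x) (hI012d x)] at hd
    have h2 : ((I011 Φ n x • fderiv ℝ (I011 Φ n) x + I011 Φ n x • fderiv ℝ (I011 Φ n) x)
        + (I012 Φ n x • fderiv ℝ (I012 Φ n) x + I012 Φ n x • fderiv ℝ (I012 Φ n) x)) v
        = (0 : RR2 →L[ℝ] ℝ) v := by rw [hd]
    simp only [ContinuousLinearMap.add_apply, ContinuousLinearMap.coe_smul', Pi.smul_apply,
      smul_eq_mul, ContinuousLinearMap.zero_apply] at h2
    linarith [h2]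
  -- hence a and b have vanishing partial derivatives
  have hr2pos : ∀ x, 0 < I011 Φ n x ^ 2 + I012 Φ n x ^ 2 := by
    intro x
    rw [habsq x]
    positivity
  have hpq : ∀ x, d1s (I011 Φ n) x = 0 ∧ d2s (I011 Φ n) x = 0 := by
    intro x
    have e1 : I011 Φ n x * d1s (I011 Φ n) x + I012 Φ n x * d2s (I011 Φ n) x = 0 := by
      have h0 := habd x (1,0)
      have hb1 : fderiv ℝ (I012 Φ n) x (1,0) = d2s (I011 Φ n) x := (CR2 x).symm
      rw [hb1] at h0
      exact h0
    have e2 : I011 Φ n x * d2s (I011 Φ n) x - I012 Φ n x * d1s (I011 Φ n) x = 0 := by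
      have h0 := habd x (0,1)
      have hb2 : fderiv ℝ (I012 Φ n) x (0,1) = -(d1s (I011 Φ n) x) := by
        show d2s (I012 Φ n) x = -(d1s (I011 Φ n) x)
        have hcr := CR1 x
        linarith
      rw [hb2] at h0
      have h0' : I011 Φ n x * d2s (I011 Φ n) x
          + I012 Φ n x * -(d1s (I011 Φ n) x) = 0 := h0
      linarith
    have hprod1 : (I011 Φ n x ^ 2 + I012 Φ n x ^ 2) * d1s (I011 Φ n) x = 0 := by
      linear_combination (I011 Φ n x) * e1 - (I012 Φ n x) * e2
    have hprod2 : (I011 Φ n x ^ 2 + I012 Φ n x ^ 2) * d2s (I011 Φ n) x = 0 := by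
      linear_combination (I012 Φ n x) * e1 + (I011 Φ n x) * e2
    have hne := (hr2pos x).ne'
    constructor
    · exact (mul_eq_zero.1 hprod1).resolve_left hne
    · exact (mul_eq_zero.1 hprod2).resolve_left hne
  -- a and b are constant
  have hfconst : ∀ (f : RR2 → ℝ), Differentiable ℝ f →
      (∀ x, d1s f x = 0) → (∀ x, d2s f x = 0) → ∀ x, f x = f 0 := by
    intro f hfd h1 h2 x
    apply is_const_of_fderiv_eq_zero hfd
    intro y
    apply ContinuousLinearMap.ext
    intro v
    have hv : v = v.1 • ((1:ℝ),(0:ℝ)) + v.2 • ((0:ℝ),(1:ℝ)) := by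
      apply Prod.ext <;> simp
    rw [hv, ContinuousLinearMap.map_add, ContinuousLinearMap.map_smul,
      ContinuousLinearMap.map_smul]
    have e1 : fderiv ℝ f y (1,0) = 0 := h1 y
    have e2 : fderiv ℝ f y (0,1) = 0 := h2 y
    rw [e1, e2]
    simp
  have haconst : ∀ x, I011 Φ n x = I011 Φ n 0 :=
    hfconst _ hI011d (fun x => (hpq x).1) (fun x => (hpq x).2)
  have hbconst : ∀ x, I012 Φ n x = I012 Φ n 0 := by
    apply hfconst _ hI012d
    · intro x
      have h1 := CR2 x
      have h2 := (hpq x).2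
      unfold d1s d2s at *
      linarith [h1, h2]
    · intro x
      have h1 := CR1 x
      have h2 := (hpq x).1
      unfold d1s d2s at *
      linarith [h1, h2]
  -- assemble the quadratic differential
  set a0 := I011 Φ n 0 with ha0def
  set b0 := I012 Φ n 0 with hb0def
  set r2 : ℝ := a0 ^ 2 + b0 ^ 2 with hr2def
  have hr2 : r2 = c1 * c1 + (H0 * c1) ^ 2 := habsq 0
  have hr2pos' : 0 < r2 := hr2pos 0
  set c : ℝ := H0 * (c1 * c1) / 4 with hcdef
  refine ⟨c * a0 / r2, -(c * b0) / r2, ?_⟩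
  intro x
  have hax : I011 Φ n x = a0 := haconst x
  have hbx : I012 Φ n x = b0 := hbconst x
  have he4 : exp (-(4 * lam x)) = (c1 * c1)⁻¹ := by
    rw [hlamx x, hc1def, exp_neg, ← exp_add, ← exp_add]
    congr 1
    ring
  have he2 : exp (-(2 * lam x)) = c1⁻¹ := by
    rw [hlamx x, hc1def, exp_neg, ← exp_add]
    congr 1
    ring
  constructor
  · rw [hH0 x, hax, hbx, he4]
    field_simp
    ring
  · rw [he2]
    have hq : (c * a0 / r2) ^ 2 + (-(c * b0) / r2) ^ 2 = c ^ 2 / r2 := by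
      field_simp
      rw [hr2def]
    rw [hq]
    have hsqrt : Real.sqrt (c ^ 2 / r2) = |c| / Real.sqrt r2 := by
      rw [Real.sqrt_div (sq_nonneg c), Real.sqrt_sq_eq_abs]
    rw [hsqrt]
    have hsr : 0 < Real.sqrt r2 := Real.sqrt_pos.2 hr2pos'
    have habs : |c| = |H0| * (c1 * c1) / 4 := by
      rw [hcdef, abs_div, abs_mul, abs_of_pos (show (0:ℝ) < c1 * c1 by positivity)]
      norm_num
    have h2 : (4:ℝ) * c1⁻¹ * (|c| / Real.sqrt r2) = (|H0| * c1) / Real.sqrt r2 := by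
      rw [habs]
      field_simp
    rw [h2, div_lt_one hsr]
    have hlt : (|H0| * c1) ^ 2 < r2 := by
      rw [hr2]
      have : (|H0| * c1) ^ 2 = (H0 * c1) ^ 2 := by
        rw [mul_pow, sq_abs, ← mul_pow]
      rw [this]
      linarith [mul_pos hc1pos hc1pos]
    calc |H0| * c1 = Real.sqrt ((|H0| * c1) ^ 2) := (Real.sqrt_sq (by positivity)).symm
      _ < Real.sqrt r2 := Real.sqrt_lt_sqrt (by positivity) hlt
end
end

section
/- Let U ⊆ ℝ² be open and Φ : U → S³ ⊂ ℝ⁴ a smooth conformal immersion into S³ with conformal factor e^λ, mean curvature H and trace-free Weingarten coefficient I⁰₁₁, satisfying the conformally constrained minimal surface equation H = e^{−4λ} I⁰₁₁ on U. Then the function u := e^{4λ} H satisfies the second order equation Δu = ∂_{x₁}(e^{2λ} ∂_{x₁}H) − ∂_{x₂}(e^{2λ} ∂_{x₂}H) on U, where Δ := ∂²_{x₁x₁} + ∂²_{x₂x₂}. -/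
noncomputable section

open Real MeasureTheory
open scoped ENNReal RealInnerProductSpace

section helpers

section helpers
variable {F : Type*} [NormedAddCommGroup F] [NormedSpace ℝ F]
variable {U : Set RR2} {x : RR2}

lemma diffAt_of_contDiffOn {f : RR2 → F} (hU : IsOpen U) (hf : ContDiffOn ℝ (⊤:ℕ∞) f U)
    (hx : x ∈ U) : DifferentiableAt ℝ f x :=
  (hf.contDiffAt (hU.mem_nhds hx)).differentiableAt (by simp)

lemma contDiffOn_fderiv_apply {f : RR2 → F} (hU : IsOpen U) (hf : ContDiffOn ℝ (⊤:ℕ∞) f U)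
    (v : RR2) : ContDiffOn ℝ (⊤:ℕ∞) (fun y => fderiv ℝ f y v) U :=
  ((contDiffOn_infty_iff_fderiv_of_isOpen hU).1 hf).2.clm_apply contDiffOn_const

lemma fderiv_eqOn_congr {f g : RR2 → F} (hU : IsOpen U) (hx : x ∈ U) (hfg : Set.EqOn f g U) :
    fderiv ℝ f x = fderiv ℝ g x :=
  (Filter.eventuallyEq_of_mem (hU.mem_nhds hx) hfg).fderiv_eq

lemma fderiv_apply_eq_zero_of_eqOn_const {f : RR2 → F} {c : F} (hU : IsOpen U) (hx : x ∈ U)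
    (hf : ∀ y ∈ U, f y = c) (v : RR2) : fderiv ℝ f x v = 0 := by
  rw [fderiv_eqOn_congr hU hx (fun y hy => hf y hy : Set.EqOn f (fun _ => c) U)]
  simp

lemma fderiv_symm {f : RR2 → F} (hU : IsOpen U) (hf : ContDiffOn ℝ (⊤:ℕ∞) f U) (hx : x ∈ U)
    (v w : RR2) :
    fderiv ℝ (fun y => fderiv ℝ f y v) x w = fderiv ℝ (fun y => fderiv ℝ f y w) x v := by
  have hd : DifferentiableAt ℝ (fderiv ℝ f) x :=
    diffAt_of_contDiffOn hU ((contDiffOn_infty_iff_fderiv_of_isOpen hU).1 hf).2 hx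
  have hsymm : IsSymmSndFDerivAt ℝ f x :=
    (hf.contDiffAt (hU.mem_nhds hx)).isSymmSndFDerivAt (by rw [minSmoothness_of_isRCLikeNormedField]; exact WithTop.coe_le_coe.2 (le_top : (2:ℕ∞) ≤ ⊤))
  have e1 : fderiv ℝ (fun y => fderiv ℝ f y v) x w = fderiv ℝ (fderiv ℝ f) x w v := by
    rw [fderiv_clm_apply hd (differentiableAt_const v)]; simp
  have e2 : fderiv ℝ (fun y => fderiv ℝ f y w) x v = fderiv ℝ (fderiv ℝ f) x v w := by
    rw [fderiv_clm_apply hd (differentiableAt_const w)]; simp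
  rw [e1, e2, hsymm w v]

lemma fderiv_exp_mul {lam : RR2 → ℝ} (hU : IsOpen U) (hlam : ContDiffOn ℝ (⊤:ℕ∞) lam U)
    (hx : x ∈ U) (k : ℝ) (v : RR2) :
    fderiv ℝ (fun y => exp (k * lam y)) x v = k * exp (k * lam x) * fderiv ℝ lam x v := by
  have hl : DifferentiableAt ℝ lam x := diffAt_of_contDiffOn hU hlam hx
  have hkl : DifferentiableAt ℝ (fun y => k * lam y) x := hl.const_mul k
  rw [fderiv_exp hkl, fderiv_const_mul hl k]
  simp [mul_comm, mul_assoc, mul_left_comm]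


set_option maxHeartbeats 2000000 in
lemma frame_inner (P E1 E2 N : RR4) (L : ℝ)
    (hP : ‖P‖ = 1) (hN : ‖N‖ = 1) (hE1 : ‖E1‖ = exp L) (hE2 : ‖E2‖ = exp L)
    (h12 : ⟪E1, E2⟫ = 0) (hNP : ⟪N, P⟫ = 0) (hN1 : ⟪N, E1⟫ = 0) (hN2 : ⟪N, E2⟫ = 0)
    (hP1 : ⟪E1, P⟫ = 0) (hP2 : ⟪E2, P⟫ = 0)
    (u w : RR4) (huP : ⟪u, P⟫ = 0) (huN : ⟪u, N⟫ = 0) :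
    ⟪u, w⟫ = exp (-(2 * L)) * (⟪u, E1⟫ * ⟪E1, w⟫ + ⟪u, E2⟫ * ⟪E2, w⟫) := by
  set c : ℝ := exp (-L) with hc
  have hcpos : 0 < exp L := exp_pos L
  have hce : c * exp L = 1 := by rw [hc, ← exp_add]; simp
  set v : Fin 4 → RR4 := ![P, c • E1, c • E2, N] with hv
  have h00 : ⟪P, P⟫ = 1 := by rw [real_inner_self_eq_norm_mul_norm, hP]; try norm_num
  have hNN : ⟪N, N⟫ = 1 := by rw [real_inner_self_eq_norm_mul_norm, hN]; try norm_num
  have hE1E1 : ⟪E1, E1⟫ = exp L * exp L := by rw [real_inner_self_eq_norm_mul_norm, hE1]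
  have hE2E2 : ⟪E2, E2⟫ = exp L * exp L := by rw [real_inner_self_eq_norm_mul_norm, hE2]
  have hP1' : ⟪P, E1⟫ = 0 := by rw [real_inner_comm]; exact hP1
  have hP2' : ⟪P, E2⟫ = 0 := by rw [real_inner_comm]; exact hP2
  have hNP' : ⟪P, N⟫ = 0 := by rw [real_inner_comm]; exact hNP
  have hN1' : ⟪E1, N⟫ = 0 := by rw [real_inner_comm]; exact hN1
  have hN2' : ⟪E2, N⟫ = 0 := by rw [real_inner_comm]; exact hN2
  have h12' : ⟪E2, E1⟫ = 0 := by rw [real_inner_comm]; exact h12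
  have hv0 : v 0 = P := rfl
  have hv1 : v 1 = c • E1 := rfl
  have hv2 : v 2 = c • E2 := rfl
  have hv3 : v 3 = N := rfl
  have hortho : Orthonormal ℝ v := by
    rw [orthonormal_iff_ite]
    intro i j
    fin_cases i <;> fin_cases j <;>
      simp only [Fin.reduceFinMk, Fin.zero_eta, Fin.mk_one, Fin.reduceEq, hv0, hv1, hv2, hv3,
        real_inner_smul_left, real_inner_smul_right, h00, hNN, hE1E1, hE2E2,
        h12, h12', hNP, hNP', hN1, hN1', hN2, hN2', hP1, hP1', hP2, hP2',
        Fin.isValue, reduceIte, mul_zero, zero_mul, if_true, if_false] <;>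
      nlinarith [hce]
  have hcard : Fintype.card (Fin 4) = Module.finrank ℝ RR4 := by
    simp [finrank_euclideanSpace]
  let b : Module.Basis (Fin 4) ℝ RR4 := basisOfOrthonormalOfCardEqFinrank hortho hcard
  have hbv : ⇑b = v := coe_basisOfOrthonormalOfCardEqFinrank hortho hcard
  have hspan : ⊤ ≤ Submodule.span ℝ (Set.range v) := by
    rw [← hbv]; rw [b.span_eq]
  let ob : OrthonormalBasis (Fin 4) ℝ RR4 := OrthonormalBasis.mk hortho hspan
  have hob : ⇑ob = v := OrthonormalBasis.coe_mk hortho hspan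
  have hsum := ob.sum_inner_mul_inner u w
  rw [Fin.sum_univ_four] at hsum
  rw [hob] at hsum
  have h0 : v 0 = P := rfl
  have h1 : v 1 = c • E1 := rfl
  have h2 : v 2 = c • E2 := rfl
  have h3 : v 3 = N := rfl
  rw [h0, h1, h2, h3, huP, huN] at hsum
  rw [real_inner_smul_right, real_inner_smul_left, real_inner_smul_right, real_inner_smul_left]
      at hsum
  have hc2 : c * c = exp (-(2 * L)) := by rw [hc, ← exp_add]; ring_nf
  linear_combination -hsum + (⟪u, E1⟫ * ⟪E1, w⟫ + ⟪u, E2⟫ * ⟪E2, w⟫) * hc2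


end helpers

section CMSfacts

variable {U : Set RR2} {Φ : RR2 → RR4} {lam : RR2 → ℝ} {n : RR2 → RR4} {x : RR2}

lemma d1_eq (f : RR2 → RR4) : d1 f = fun y => fderiv ℝ f y ((1:ℝ), (0:ℝ)) := rfl
lemma d2_eq (f : RR2 → RR4) : d2 f = fun y => fderiv ℝ f y ((0:ℝ), (1:ℝ)) := rfl
lemma d1s_eq (f : RR2 → ℝ) : d1s f = fun y => fderiv ℝ f y ((1:ℝ), (0:ℝ)) := rfl
lemma d2s_eq (f : RR2 → ℝ) : d2s f = fun y => fderiv ℝ f y ((0:ℝ), (1:ℝ)) := rfl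

/-- `⟪∂_v Φ, Φ⟫ = 0` on `U`. -/
lemma inner_dPhi_Phi (hU : IsOpen U) (h : IsConformalImmersionS3 U Φ lam n) (hx : x ∈ U)
    (v : RR2) : ⟪fderiv ℝ Φ x v, Φ x⟫ = 0 := by
  have hd := diffAt_of_contDiffOn hU h.smooth_Phi hx
  have h0 : fderiv ℝ (fun y => ⟪Φ y, Φ y⟫) x v = 0 :=
    fderiv_apply_eq_zero_of_eqOn_const hU hx (fun y hy => by
      rw [real_inner_self_eq_norm_mul_norm, h.mem_sphere y hy]; try norm_num) v
  rw [fderiv_inner_apply (𝕜 := ℝ) hd hd] at h0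
  linarith [real_inner_comm (Φ x) (fderiv ℝ Φ x v), h0]

/-- `⟪∂_v n, n⟫ = 0` on `U`. -/
lemma inner_dn_n (hU : IsOpen U) (h : IsConformalImmersionS3 U Φ lam n) (hx : x ∈ U)
    (v : RR2) : ⟪fderiv ℝ n x v, n x⟫ = 0 := by
  have hd := diffAt_of_contDiffOn hU h.smooth_n hx
  have h0 : fderiv ℝ (fun y => ⟪n y, n y⟫) x v = 0 :=
    fderiv_apply_eq_zero_of_eqOn_const hU hx (fun y hy => by
      rw [real_inner_self_eq_norm_mul_norm, h.n_norm y hy]; try norm_num) v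
  rw [fderiv_inner_apply (𝕜 := ℝ) hd hd] at h0
  linarith [real_inner_comm (n x) (fderiv ℝ n x v), h0]

/-- `⟪∂_v n, Φ⟫ = 0` on `U` (for coordinate directions). -/
lemma inner_dn_Phi (hU : IsOpen U) (h : IsConformalImmersionS3 U Φ lam n) (hx : x ∈ U)
    (v : RR2) (hv : ⟪n x, fderiv ℝ Φ x v⟫ = 0) : ⟪fderiv ℝ n x v, Φ x⟫ = 0 := by
  have hdn := diffAt_of_contDiffOn hU h.smooth_n hx
  have hdp := diffAt_of_contDiffOn hU h.smooth_Phi hx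
  have h0 : fderiv ℝ (fun y => ⟪n y, Φ y⟫) x v = 0 :=
    fderiv_apply_eq_zero_of_eqOn_const hU hx (fun y hy => h.n_orth_Phi y hy) v
  rw [fderiv_inner_apply (𝕜 := ℝ) hdn hdp] at h0
  rw [hv] at h0
  linarith

/-- `⟪∂_v n, ∂_w Φ⟫ = -⟪n, ∂_v ∂_w Φ⟫` on `U`. -/
lemma inner_dn_dPhi (hU : IsOpen U) (h : IsConformalImmersionS3 U Φ lam n) (hx : x ∈ U)
    (v w : RR2) (hw : ∀ y ∈ U, ⟪n y, fderiv ℝ Φ y w⟫ = 0) :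
    ⟪fderiv ℝ n x v, fderiv ℝ Φ x w⟫
      = -⟪n x, fderiv ℝ (fun y => fderiv ℝ Φ y w) x v⟫ := by
  have hdn := diffAt_of_contDiffOn hU h.smooth_n hx
  have hdw := diffAt_of_contDiffOn hU (contDiffOn_fderiv_apply hU h.smooth_Phi w) hx
  have h0 : fderiv ℝ (fun y => ⟪n y, fderiv ℝ Φ y w⟫) x v = 0 :=
    fderiv_apply_eq_zero_of_eqOn_const hU hx hw v
  rw [fderiv_inner_apply (𝕜 := ℝ) hdn hdw] at h0
  linarith

/-- metric identity `⟪d1 Φ, d1 Φ⟫ = e^{2λ}` on `U`. -/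
lemma metric1 (h : IsConformalImmersionS3 U Φ lam n) :
    ∀ y ∈ U, ⟪fderiv ℝ Φ y ((1:ℝ),(0:ℝ)), fderiv ℝ Φ y ((1:ℝ),(0:ℝ))⟫ = exp (2 * lam y) := by
  intro y hy
  have : fderiv ℝ Φ y ((1:ℝ),(0:ℝ)) = d1 Φ y := rfl
  rw [this, real_inner_self_eq_norm_mul_norm, h.conf_norm1 y hy, ← exp_add]
  ring_nf

lemma metric2 (h : IsConformalImmersionS3 U Φ lam n) :
    ∀ y ∈ U, ⟪fderiv ℝ Φ y ((0:ℝ),(1:ℝ)), fderiv ℝ Φ y ((0:ℝ),(1:ℝ))⟫ = exp (2 * lam y) := by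
  intro y hy
  have : fderiv ℝ Φ y ((0:ℝ),(1:ℝ)) = d2 Φ y := rfl
  rw [this, real_inner_self_eq_norm_mul_norm, h.conf_norm2 y hy, ← exp_add]
  ring_nf

/-- `⟪∂_v ∂_w Φ, ∂_w Φ⟫ = e^{2λ} ∂_v λ` for unit metric directions. -/
lemma inner_ddPhi_same (hU : IsOpen U) (h : IsConformalImmersionS3 U Φ lam n) (hx : x ∈ U)
    (v w : RR2) (hw : ∀ y ∈ U, ⟪fderiv ℝ Φ y w, fderiv ℝ Φ y w⟫ = exp (2 * lam y)) :
    ⟪fderiv ℝ (fun y => fderiv ℝ Φ y w) x v, fderiv ℝ Φ x w⟫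
      = exp (2 * lam x) * fderiv ℝ lam x v := by
  have hdw := diffAt_of_contDiffOn hU (contDiffOn_fderiv_apply hU h.smooth_Phi w) hx
  have h0 : fderiv ℝ (fun y => ⟪fderiv ℝ Φ y w, fderiv ℝ Φ y w⟫) x v
      = fderiv ℝ (fun y => exp (2 * lam y)) x v := by
    rw [fderiv_eqOn_congr hU hx (fun y hy => hw y hy)]
  rw [fderiv_inner_apply (𝕜 := ℝ) hdw hdw] at h0
  rw [fderiv_exp_mul hU h.smooth_lam hx 2 v] at h0
  linarith [real_inner_comm (fderiv ℝ Φ x w) (fderiv ℝ (fun y => fderiv ℝ Φ y w) x v), h0]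

/-- cross identity: differentiate `⟪d1 Φ, d2 Φ⟫ = 0`. -/
lemma inner_ddPhi_cross (hU : IsOpen U) (h : IsConformalImmersionS3 U Φ lam n) (hx : x ∈ U)
    (v : RR2) :
    ⟪fderiv ℝ (fun y => fderiv ℝ Φ y ((1:ℝ),(0:ℝ))) x v, fderiv ℝ Φ x ((0:ℝ),(1:ℝ))⟫
      = -⟪fderiv ℝ Φ x ((1:ℝ),(0:ℝ)), fderiv ℝ (fun y => fderiv ℝ Φ y ((0:ℝ),(1:ℝ))) x v⟫ := by
  have hd1 := diffAt_of_contDiffOn hU (contDiffOn_fderiv_apply hU h.smooth_Phi ((1:ℝ),(0:ℝ))) hx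
  have hd2 := diffAt_of_contDiffOn hU (contDiffOn_fderiv_apply hU h.smooth_Phi ((0:ℝ),(1:ℝ))) hx
  have h0 : fderiv ℝ
      (fun y => ⟪fderiv ℝ Φ y ((1:ℝ),(0:ℝ)), fderiv ℝ Φ y ((0:ℝ),(1:ℝ))⟫) x v = 0 :=
    fderiv_apply_eq_zero_of_eqOn_const hU hx (fun y hy => h.conf_orth y hy) v
  rw [fderiv_inner_apply (𝕜 := ℝ) hd1 hd2] at h0
  linarith

end CMSfacts


section CMScodazzi

variable {U : Set RR2} {Φ : RR2 → RR4} {lam : RR2 → ℝ} {n : RR2 → RR4} {x : RR2}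

lemma smooth_I11 (hU : IsOpen U) (h : IsConformalImmersionS3 U Φ lam n) :
    ContDiffOn ℝ (⊤:ℕ∞) (I11 Φ n) U := by
  have : I11 Φ n
      = fun y => ⟪n y, fderiv ℝ (fun z => fderiv ℝ Φ z ((1:ℝ),(0:ℝ))) y ((1:ℝ),(0:ℝ))⟫ := rfl
  rw [this]
  exact h.smooth_n.inner ℝ (contDiffOn_fderiv_apply hU (contDiffOn_fderiv_apply hU h.smooth_Phi _) _)

lemma smooth_I12 (hU : IsOpen U) (h : IsConformalImmersionS3 U Φ lam n) :
    ContDiffOn ℝ (⊤:ℕ∞) (I12 Φ n) U := by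
  have : I12 Φ n
      = fun y => ⟪n y, fderiv ℝ (fun z => fderiv ℝ Φ z ((1:ℝ),(0:ℝ))) y ((0:ℝ),(1:ℝ))⟫ := rfl
  rw [this]
  exact h.smooth_n.inner ℝ (contDiffOn_fderiv_apply hU (contDiffOn_fderiv_apply hU h.smooth_Phi _) _)

lemma smooth_I22 (hU : IsOpen U) (h : IsConformalImmersionS3 U Φ lam n) :
    ContDiffOn ℝ (⊤:ℕ∞) (I22 Φ n) U := by
  have : I22 Φ n
      = fun y => ⟪n y, fderiv ℝ (fun z => fderiv ℝ Φ z ((0:ℝ),(1:ℝ))) y ((0:ℝ),(1:ℝ))⟫ := rfl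
  rw [this]
  exact h.smooth_n.inner ℝ (contDiffOn_fderiv_apply hU (contDiffOn_fderiv_apply hU h.smooth_Phi _) _)

lemma smooth_I011 (hU : IsOpen U) (h : IsConformalImmersionS3 U Φ lam n) :
    ContDiffOn ℝ (⊤:ℕ∞) (I011 Φ n) U := by
  have : I011 Φ n = fun y => (I11 Φ n y - I22 Φ n y) / 2 := rfl
  rw [this]
  exact ((smooth_I11 hU h).sub (smooth_I22 hU h)).div_const 2

lemma smooth_H (hU : IsOpen U) (h : IsConformalImmersionS3 U Φ lam n) :
    ContDiffOn ℝ (⊤:ℕ∞) (meanCurv Φ lam n) U := by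
  have : meanCurv Φ lam n
      = fun y => (1/2) * exp (-(2 * lam y)) * (I11 Φ n y + I22 Φ n y) := rfl
  rw [this]
  have hexp : ContDiffOn ℝ (⊤:ℕ∞) (fun y => exp (-(2 * lam y))) U :=
    Real.contDiff_exp.comp_contDiffOn (contDiffOn_const.mul h.smooth_lam).neg
  exact (contDiffOn_const.mul hexp).mul ((smooth_I11 hU h).add (smooth_I22 hU h))

/-- First Codazzi equation: `∂₂I₁₁ - ∂₁I₁₂ = (I₁₁+I₂₂) ∂₂λ`. -/
lemma codazzi1 (hU : IsOpen U) (h : IsConformalImmersionS3 U Φ lam n) (hx : x ∈ U) :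
    fderiv ℝ (I11 Φ n) x ((0:ℝ),(1:ℝ)) - fderiv ℝ (I12 Φ n) x ((1:ℝ),(0:ℝ))
      = (I11 Φ n x + I22 Φ n x) * fderiv ℝ lam x ((0:ℝ),(1:ℝ)) := by
  have sP := h.smooth_Phi
  have se1 : ContDiffOn ℝ (⊤:ℕ∞) (fun y => fderiv ℝ Φ y ((1:ℝ),(0:ℝ))) U :=
    contDiffOn_fderiv_apply hU sP _
  have se2 : ContDiffOn ℝ (⊤:ℕ∞) (fun y => fderiv ℝ Φ y ((0:ℝ),(1:ℝ))) U :=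
    contDiffOn_fderiv_apply hU sP _
  have hdn := diffAt_of_contDiffOn hU h.smooth_n hx
  have hd11 := diffAt_of_contDiffOn hU (contDiffOn_fderiv_apply hU se1 ((1:ℝ),(0:ℝ))) hx
  have hd21 := diffAt_of_contDiffOn hU (contDiffOn_fderiv_apply hU se1 ((0:ℝ),(1:ℝ))) hx
  -- expansions
  have e11 : fderiv ℝ (I11 Φ n) x ((0:ℝ),(1:ℝ))
      = ⟪n x, fderiv ℝ (fun y => fderiv ℝ (fun z => fderiv ℝ Φ z ((1:ℝ),(0:ℝ))) y ((1:ℝ),(0:ℝ))) x ((0:ℝ),(1:ℝ))⟫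
        + ⟪fderiv ℝ n x ((0:ℝ),(1:ℝ)), fderiv ℝ (fun z => fderiv ℝ Φ z ((1:ℝ),(0:ℝ))) x ((1:ℝ),(0:ℝ))⟫ := by
    have hI : I11 Φ n = fun y => ⟪n y, fderiv ℝ (fun z => fderiv ℝ Φ z ((1:ℝ),(0:ℝ))) y ((1:ℝ),(0:ℝ))⟫ := rfl
    rw [hI, fderiv_inner_apply (𝕜 := ℝ) hdn hd11]
  have e12 : fderiv ℝ (I12 Φ n) x ((1:ℝ),(0:ℝ))
      = ⟪n x, fderiv ℝ (fun y => fderiv ℝ (fun z => fderiv ℝ Φ z ((1:ℝ),(0:ℝ))) y ((0:ℝ),(1:ℝ))) x ((1:ℝ),(0:ℝ))⟫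
        + ⟪fderiv ℝ n x ((1:ℝ),(0:ℝ)), fderiv ℝ (fun z => fderiv ℝ Φ z ((1:ℝ),(0:ℝ))) x ((0:ℝ),(1:ℝ))⟫ := by
    have hI : I12 Φ n = fun y => ⟪n y, fderiv ℝ (fun z => fderiv ℝ Φ z ((1:ℝ),(0:ℝ))) y ((0:ℝ),(1:ℝ))⟫ := rfl
    rw [hI, fderiv_inner_apply (𝕜 := ℝ) hdn hd21]
  have hsym3 : fderiv ℝ (fun y => fderiv ℝ (fun z => fderiv ℝ Φ z ((1:ℝ),(0:ℝ))) y ((1:ℝ),(0:ℝ))) x ((0:ℝ),(1:ℝ))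
      = fderiv ℝ (fun y => fderiv ℝ (fun z => fderiv ℝ Φ z ((1:ℝ),(0:ℝ))) y ((0:ℝ),(1:ℝ))) x ((1:ℝ),(0:ℝ)) :=
    fderiv_symm hU se1 hx _ _
  -- symmetry of mixed second derivative of Φ at points of U
  have hsymP : ∀ y ∈ U, fderiv ℝ (fun z => fderiv ℝ Φ z ((0:ℝ),(1:ℝ))) y ((1:ℝ),(0:ℝ))
      = fderiv ℝ (fun z => fderiv ℝ Φ z ((1:ℝ),(0:ℝ))) y ((0:ℝ),(1:ℝ)) :=
    fun y hy => fderiv_symm hU sP hy _ _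
  -- frame data at x
  have hA := frame_inner (Φ x) (fderiv ℝ Φ x ((1:ℝ),(0:ℝ))) (fderiv ℝ Φ x ((0:ℝ),(1:ℝ))) (n x) (lam x)
      (h.mem_sphere x hx) (h.n_norm x hx) (h.conf_norm1 x hx) (h.conf_norm2 x hx)
      (h.conf_orth x hx) (h.n_orth_Phi x hx) (h.n_orth_d1 x hx) (h.n_orth_d2 x hx)
      (inner_dPhi_Phi hU h hx _) (inner_dPhi_Phi hU h hx _)
      (fderiv ℝ n x ((0:ℝ),(1:ℝ))) (fderiv ℝ (fun z => fderiv ℝ Φ z ((1:ℝ),(0:ℝ))) x ((1:ℝ),(0:ℝ)))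
      (inner_dn_Phi hU h hx _ (h.n_orth_d2 x hx)) (inner_dn_n hU h hx _)
  have hB := frame_inner (Φ x) (fderiv ℝ Φ x ((1:ℝ),(0:ℝ))) (fderiv ℝ Φ x ((0:ℝ),(1:ℝ))) (n x) (lam x)
      (h.mem_sphere x hx) (h.n_norm x hx) (h.conf_norm1 x hx) (h.conf_norm2 x hx)
      (h.conf_orth x hx) (h.n_orth_Phi x hx) (h.n_orth_d1 x hx) (h.n_orth_d2 x hx)
      (inner_dPhi_Phi hU h hx _) (inner_dPhi_Phi hU h hx _)
      (fderiv ℝ n x ((1:ℝ),(0:ℝ))) (fderiv ℝ (fun z => fderiv ℝ Φ z ((1:ℝ),(0:ℝ))) x ((0:ℝ),(1:ℝ)))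
      (inner_dn_Phi hU h hx _ (h.n_orth_d1 x hx)) (inner_dn_n hU h hx _)
  -- coefficient values
  have hu1A : ⟪fderiv ℝ n x ((0:ℝ),(1:ℝ)), fderiv ℝ Φ x ((1:ℝ),(0:ℝ))⟫ = -(I12 Φ n x) := by
    rw [inner_dn_dPhi hU h hx _ _ (fun y hy => h.n_orth_d1 y hy)]; rfl
  have hu2A : ⟪fderiv ℝ n x ((0:ℝ),(1:ℝ)), fderiv ℝ Φ x ((0:ℝ),(1:ℝ))⟫ = -(I22 Φ n x) := by
    rw [inner_dn_dPhi hU h hx _ _ (fun y hy => h.n_orth_d2 y hy)]; rfl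
  have hu1B : ⟪fderiv ℝ n x ((1:ℝ),(0:ℝ)), fderiv ℝ Φ x ((1:ℝ),(0:ℝ))⟫ = -(I11 Φ n x) := by
    rw [inner_dn_dPhi hU h hx _ _ (fun y hy => h.n_orth_d1 y hy)]; rfl
  have hu2B : ⟪fderiv ℝ n x ((1:ℝ),(0:ℝ)), fderiv ℝ Φ x ((0:ℝ),(1:ℝ))⟫ = -(I12 Φ n x) := by
    rw [inner_dn_dPhi hU h hx _ _ (fun y hy => h.n_orth_d2 y hy), hsymP x hx]; rfl
  -- metric derivative values
  have hm11_1 : ⟪fderiv ℝ (fun z => fderiv ℝ Φ z ((1:ℝ),(0:ℝ))) x ((1:ℝ),(0:ℝ)), fderiv ℝ Φ x ((1:ℝ),(0:ℝ))⟫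
      = exp (2 * lam x) * fderiv ℝ lam x ((1:ℝ),(0:ℝ)) :=
    inner_ddPhi_same hU h hx _ _ (metric1 h)
  have hm11_2 : ⟪fderiv ℝ (fun z => fderiv ℝ Φ z ((1:ℝ),(0:ℝ))) x ((0:ℝ),(1:ℝ)), fderiv ℝ Φ x ((1:ℝ),(0:ℝ))⟫
      = exp (2 * lam x) * fderiv ℝ lam x ((0:ℝ),(1:ℝ)) :=
    inner_ddPhi_same hU h hx _ _ (metric1 h)
  have hm12_1 : ⟪fderiv ℝ (fun z => fderiv ℝ Φ z ((1:ℝ),(0:ℝ))) x ((1:ℝ),(0:ℝ)), fderiv ℝ Φ x ((0:ℝ),(1:ℝ))⟫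
      = -(exp (2 * lam x) * fderiv ℝ lam x ((0:ℝ),(1:ℝ))) := by
    rw [inner_ddPhi_cross hU h hx _]
    rw [hsymP x hx]
    rw [real_inner_comm]
    rw [hm11_2]
  -- assemble
  have hee : exp (-(2 * lam x)) * exp (2 * lam x) = 1 := by rw [← exp_add]; simp
  have hw2B : ⟪fderiv ℝ (fun z => fderiv ℝ Φ z ((1:ℝ),(0:ℝ))) x ((0:ℝ),(1:ℝ)), fderiv ℝ Φ x ((0:ℝ),(1:ℝ))⟫
      = exp (2 * lam x) * fderiv ℝ lam x ((1:ℝ),(0:ℝ)) := by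
    rw [← hsymP x hx]; exact inner_ddPhi_same hU h hx _ _ (metric2 h)
  have hvA1 : ⟪fderiv ℝ Φ x ((1:ℝ),(0:ℝ)), fderiv ℝ (fun z => fderiv ℝ Φ z ((1:ℝ),(0:ℝ))) x ((1:ℝ),(0:ℝ))⟫
      = exp (2 * lam x) * fderiv ℝ lam x ((1:ℝ),(0:ℝ)) := by rw [real_inner_comm]; exact hm11_1
  have hvA2 : ⟪fderiv ℝ Φ x ((0:ℝ),(1:ℝ)), fderiv ℝ (fun z => fderiv ℝ Φ z ((1:ℝ),(0:ℝ))) x ((1:ℝ),(0:ℝ))⟫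
      = -(exp (2 * lam x) * fderiv ℝ lam x ((0:ℝ),(1:ℝ))) := by rw [real_inner_comm]; exact hm12_1
  have hvB1 : ⟪fderiv ℝ Φ x ((1:ℝ),(0:ℝ)), fderiv ℝ (fun z => fderiv ℝ Φ z ((1:ℝ),(0:ℝ))) x ((0:ℝ),(1:ℝ))⟫
      = exp (2 * lam x) * fderiv ℝ lam x ((0:ℝ),(1:ℝ)) := by rw [real_inner_comm]; exact hm11_2
  have hvB2 : ⟪fderiv ℝ Φ x ((0:ℝ),(1:ℝ)), fderiv ℝ (fun z => fderiv ℝ Φ z ((1:ℝ),(0:ℝ))) x ((0:ℝ),(1:ℝ))⟫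
      = exp (2 * lam x) * fderiv ℝ lam x ((1:ℝ),(0:ℝ)) := by rw [real_inner_comm]; exact hw2B
  rw [hu1A, hu2A, hvA1, hvA2] at hA
  rw [hu1B, hu2B, hvB1, hvB2] at hB
  rw [e11, e12, hsym3]
  linear_combination hA - hB
    + ((I11 Φ n x + I22 Φ n x) * fderiv ℝ lam x ((0:ℝ),(1:ℝ))) * hee

/-- Second Codazzi equation: `∂₁I₂₂ - ∂₂I₁₂ = (I₁₁+I₂₂) ∂₁λ`. -/
lemma codazzi2 (hU : IsOpen U) (h : IsConformalImmersionS3 U Φ lam n) (hx : x ∈ U) :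
    fderiv ℝ (I22 Φ n) x ((1:ℝ),(0:ℝ)) - fderiv ℝ (I12 Φ n) x ((0:ℝ),(1:ℝ))
      = (I11 Φ n x + I22 Φ n x) * fderiv ℝ lam x ((1:ℝ),(0:ℝ)) := by
  have sP := h.smooth_Phi
  have se1 : ContDiffOn ℝ (⊤:ℕ∞) (fun y => fderiv ℝ Φ y ((1:ℝ),(0:ℝ))) U :=
    contDiffOn_fderiv_apply hU sP _
  have se2 : ContDiffOn ℝ (⊤:ℕ∞) (fun y => fderiv ℝ Φ y ((0:ℝ),(1:ℝ))) U :=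
    contDiffOn_fderiv_apply hU sP _
  have hdn := diffAt_of_contDiffOn hU h.smooth_n hx
  have hd22 := diffAt_of_contDiffOn hU (contDiffOn_fderiv_apply hU se2 ((0:ℝ),(1:ℝ))) hx
  have hd21 := diffAt_of_contDiffOn hU (contDiffOn_fderiv_apply hU se1 ((0:ℝ),(1:ℝ))) hx
  have hsymP : ∀ y ∈ U, fderiv ℝ (fun z => fderiv ℝ Φ z ((0:ℝ),(1:ℝ))) y ((1:ℝ),(0:ℝ))
      = fderiv ℝ (fun z => fderiv ℝ Φ z ((1:ℝ),(0:ℝ))) y ((0:ℝ),(1:ℝ)) :=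
    fun y hy => fderiv_symm hU sP hy _ _
  -- expansions
  have e22 : fderiv ℝ (I22 Φ n) x ((1:ℝ),(0:ℝ))
      = ⟪n x, fderiv ℝ (fun y => fderiv ℝ (fun z => fderiv ℝ Φ z ((0:ℝ),(1:ℝ))) y ((0:ℝ),(1:ℝ))) x ((1:ℝ),(0:ℝ))⟫
        + ⟪fderiv ℝ n x ((1:ℝ),(0:ℝ)), fderiv ℝ (fun z => fderiv ℝ Φ z ((0:ℝ),(1:ℝ))) x ((0:ℝ),(1:ℝ))⟫ := by
    have hI : I22 Φ n = fun y => ⟪n y, fderiv ℝ (fun z => fderiv ℝ Φ z ((0:ℝ),(1:ℝ))) y ((0:ℝ),(1:ℝ))⟫ := rfl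
    rw [hI, fderiv_inner_apply (𝕜 := ℝ) hdn hd22]
  have e12 : fderiv ℝ (I12 Φ n) x ((0:ℝ),(1:ℝ))
      = ⟪n x, fderiv ℝ (fun y => fderiv ℝ (fun z => fderiv ℝ Φ z ((1:ℝ),(0:ℝ))) y ((0:ℝ),(1:ℝ))) x ((0:ℝ),(1:ℝ))⟫
        + ⟪fderiv ℝ n x ((0:ℝ),(1:ℝ)), fderiv ℝ (fun z => fderiv ℝ Φ z ((1:ℝ),(0:ℝ))) x ((0:ℝ),(1:ℝ))⟫ := by
    have hI : I12 Φ n = fun y => ⟪n y, fderiv ℝ (fun z => fderiv ℝ Φ z ((1:ℝ),(0:ℝ))) y ((0:ℝ),(1:ℝ))⟫ := rfl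
    rw [hI, fderiv_inner_apply (𝕜 := ℝ) hdn hd21]
  -- equality of the third-order terms
  have hthird : fderiv ℝ (fun y => fderiv ℝ (fun z => fderiv ℝ Φ z ((0:ℝ),(1:ℝ))) y ((0:ℝ),(1:ℝ))) x ((1:ℝ),(0:ℝ))
      = fderiv ℝ (fun y => fderiv ℝ (fun z => fderiv ℝ Φ z ((1:ℝ),(0:ℝ))) y ((0:ℝ),(1:ℝ))) x ((0:ℝ),(1:ℝ)) := by
    have h1 : fderiv ℝ (fun y => fderiv ℝ (fun z => fderiv ℝ Φ z ((0:ℝ),(1:ℝ))) y ((0:ℝ),(1:ℝ))) x ((1:ℝ),(0:ℝ))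
        = fderiv ℝ (fun y => fderiv ℝ (fun z => fderiv ℝ Φ z ((0:ℝ),(1:ℝ))) y ((1:ℝ),(0:ℝ))) x ((0:ℝ),(1:ℝ)) :=
      fderiv_symm hU se2 hx _ _
    have h2 : fderiv ℝ (fun y => fderiv ℝ (fun z => fderiv ℝ Φ z ((0:ℝ),(1:ℝ))) y ((1:ℝ),(0:ℝ))) x
        = fderiv ℝ (fun y => fderiv ℝ (fun z => fderiv ℝ Φ z ((1:ℝ),(0:ℝ))) y ((0:ℝ),(1:ℝ))) x :=
      fderiv_eqOn_congr hU hx (fun y hy => hsymP y hy)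
    rw [h1, h2]
  -- frame expansions for the two first-order terms
  have hC := frame_inner (Φ x) (fderiv ℝ Φ x ((1:ℝ),(0:ℝ))) (fderiv ℝ Φ x ((0:ℝ),(1:ℝ))) (n x) (lam x)
      (h.mem_sphere x hx) (h.n_norm x hx) (h.conf_norm1 x hx) (h.conf_norm2 x hx)
      (h.conf_orth x hx) (h.n_orth_Phi x hx) (h.n_orth_d1 x hx) (h.n_orth_d2 x hx)
      (inner_dPhi_Phi hU h hx _) (inner_dPhi_Phi hU h hx _)
      (fderiv ℝ n x ((1:ℝ),(0:ℝ))) (fderiv ℝ (fun z => fderiv ℝ Φ z ((0:ℝ),(1:ℝ))) x ((0:ℝ),(1:ℝ)))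
      (inner_dn_Phi hU h hx _ (h.n_orth_d1 x hx)) (inner_dn_n hU h hx _)
  have hD := frame_inner (Φ x) (fderiv ℝ Φ x ((1:ℝ),(0:ℝ))) (fderiv ℝ Φ x ((0:ℝ),(1:ℝ))) (n x) (lam x)
      (h.mem_sphere x hx) (h.n_norm x hx) (h.conf_norm1 x hx) (h.conf_norm2 x hx)
      (h.conf_orth x hx) (h.n_orth_Phi x hx) (h.n_orth_d1 x hx) (h.n_orth_d2 x hx)
      (inner_dPhi_Phi hU h hx _) (inner_dPhi_Phi hU h hx _)
      (fderiv ℝ n x ((0:ℝ),(1:ℝ))) (fderiv ℝ (fun z => fderiv ℝ Φ z ((1:ℝ),(0:ℝ))) x ((0:ℝ),(1:ℝ)))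
      (inner_dn_Phi hU h hx _ (h.n_orth_d2 x hx)) (inner_dn_n hU h hx _)
  -- coefficient values
  have hu1C : ⟪fderiv ℝ n x ((1:ℝ),(0:ℝ)), fderiv ℝ Φ x ((1:ℝ),(0:ℝ))⟫ = -(I11 Φ n x) := by
    rw [inner_dn_dPhi hU h hx _ _ (fun y hy => h.n_orth_d1 y hy)]; rfl
  have hu2C : ⟪fderiv ℝ n x ((1:ℝ),(0:ℝ)), fderiv ℝ Φ x ((0:ℝ),(1:ℝ))⟫ = -(I12 Φ n x) := by
    rw [inner_dn_dPhi hU h hx _ _ (fun y hy => h.n_orth_d2 y hy), hsymP x hx]; rfl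
  have hu1D : ⟪fderiv ℝ n x ((0:ℝ),(1:ℝ)), fderiv ℝ Φ x ((1:ℝ),(0:ℝ))⟫ = -(I12 Φ n x) := by
    rw [inner_dn_dPhi hU h hx _ _ (fun y hy => h.n_orth_d1 y hy)]; rfl
  have hu2D : ⟪fderiv ℝ n x ((0:ℝ),(1:ℝ)), fderiv ℝ Φ x ((0:ℝ),(1:ℝ))⟫ = -(I22 Φ n x) := by
    rw [inner_dn_dPhi hU h hx _ _ (fun y hy => h.n_orth_d2 y hy)]; rfl
  -- metric values
  have hw21 : ⟪fderiv ℝ (fun z => fderiv ℝ Φ z ((1:ℝ),(0:ℝ))) x ((0:ℝ),(1:ℝ)), fderiv ℝ Φ x ((0:ℝ),(1:ℝ))⟫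
      = exp (2 * lam x) * fderiv ℝ lam x ((1:ℝ),(0:ℝ)) := by
    rw [← hsymP x hx]; exact inner_ddPhi_same hU h hx _ _ (metric2 h)
  have hvC1 : ⟪fderiv ℝ Φ x ((1:ℝ),(0:ℝ)), fderiv ℝ (fun z => fderiv ℝ Φ z ((0:ℝ),(1:ℝ))) x ((0:ℝ),(1:ℝ))⟫
      = -(exp (2 * lam x) * fderiv ℝ lam x ((1:ℝ),(0:ℝ))) := by
    have hcross := inner_ddPhi_cross hU h hx ((0:ℝ),(1:ℝ))
    rw [hw21] at hcross
    linarith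
  have hvC2 : ⟪fderiv ℝ Φ x ((0:ℝ),(1:ℝ)), fderiv ℝ (fun z => fderiv ℝ Φ z ((0:ℝ),(1:ℝ))) x ((0:ℝ),(1:ℝ))⟫
      = exp (2 * lam x) * fderiv ℝ lam x ((0:ℝ),(1:ℝ)) := by
    rw [real_inner_comm]; exact inner_ddPhi_same hU h hx _ _ (metric2 h)
  have hvD1 : ⟪fderiv ℝ Φ x ((1:ℝ),(0:ℝ)), fderiv ℝ (fun z => fderiv ℝ Φ z ((1:ℝ),(0:ℝ))) x ((0:ℝ),(1:ℝ))⟫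
      = exp (2 * lam x) * fderiv ℝ lam x ((0:ℝ),(1:ℝ)) := by
    rw [real_inner_comm]; exact inner_ddPhi_same hU h hx _ _ (metric1 h)
  have hvD2 : ⟪fderiv ℝ Φ x ((0:ℝ),(1:ℝ)), fderiv ℝ (fun z => fderiv ℝ Φ z ((1:ℝ),(0:ℝ))) x ((0:ℝ),(1:ℝ))⟫
      = exp (2 * lam x) * fderiv ℝ lam x ((1:ℝ),(0:ℝ)) := by
    rw [real_inner_comm]; exact hw21
  have hee : exp (-(2 * lam x)) * exp (2 * lam x) = 1 := by rw [← exp_add]; simp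
  rw [hu1C, hu2C, hvC1, hvC2] at hC
  rw [hu1D, hu2D, hvD1, hvD2] at hD
  rw [e22, e12, hthird]
  linear_combination hC - hD
    + ((I11 Φ n x + I22 Φ n x) * fderiv ℝ lam x ((1:ℝ),(0:ℝ))) * hee

end CMScodazzi


section CMSkey

variable {U : Set RR2} {Φ : RR2 → RR4} {lam : RR2 → ℝ} {n : RR2 → RR4} {x : RR2}

lemma fderiv_comb {f g : RR2 → ℝ} (hf : DifferentiableAt ℝ f x) (hg : DifferentiableAt ℝ g x)
    (a b : ℝ) (v : RR2) :
    fderiv ℝ (fun y => a * f y - b * g y) x v = a * fderiv ℝ f x v - b * fderiv ℝ g x v := by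
  rw [fderiv_fun_sub (hf.const_mul a) (hg.const_mul b), fderiv_const_mul hf a, fderiv_const_mul hg b]
  simp

/-- Derivative of the mean curvature. -/
lemma dH (hU : IsOpen U) (h : IsConformalImmersionS3 U Φ lam n) (hx : x ∈ U) (v : RR2) :
    fderiv ℝ (meanCurv Φ lam n) x v
      = (1/2) * exp (-(2 * lam x)) * (fderiv ℝ (I11 Φ n) x v + fderiv ℝ (I22 Φ n) x v)
        - exp (-(2 * lam x)) * (I11 Φ n x + I22 Φ n x) * fderiv ℝ lam x v := by
  have hdl := diffAt_of_contDiffOn hU h.smooth_lam hx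
  have hd1 := diffAt_of_contDiffOn hU (smooth_I11 hU h) hx
  have hd2 := diffAt_of_contDiffOn hU (smooth_I22 hU h) hx
  have hdexp : DifferentiableAt ℝ (fun y => exp (-(2 * lam y))) x :=
    ((hdl.const_mul (2:ℝ)).neg).exp
  have hfun : (fun y => exp (-(2 * lam y))) = (fun y => exp ((-2) * lam y)) := by
    funext y; ring_nf
  have hdexpv : fderiv ℝ (fun y => exp (-(2 * lam y))) x v
      = (-2) * exp (-(2 * lam x)) * fderiv ℝ lam x v := by
    rw [hfun, fderiv_exp_mul hU h.smooth_lam hx (-2) v]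
    ring_nf
  have hstep : meanCurv Φ lam n
      = fun y => ((1/2) * exp (-(2 * lam y))) * (I11 Φ n y + I22 Φ n y) := rfl
  rw [hstep]
  have hc : DifferentiableAt ℝ (fun y => (1/2) * exp (-(2 * lam y))) x := hdexp.const_mul _
  rw [fderiv_fun_mul (𝕜 := ℝ) hc
    (show DifferentiableAt ℝ (fun y => I11 Φ n y + I22 Φ n y) x from hd1.add hd2)]
  simp only [ContinuousLinearMap.add_apply, ContinuousLinearMap.smul_apply, smul_eq_mul]
  rw [fderiv_fun_add hd1 hd2, fderiv_const_mul hdexp (1/2)]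
  simp only [ContinuousLinearMap.add_apply, ContinuousLinearMap.smul_apply, smul_eq_mul]
  rw [hdexpv]
  ring

lemma dI011 (hU : IsOpen U) (h : IsConformalImmersionS3 U Φ lam n) (hx : x ∈ U) (v : RR2) :
    fderiv ℝ (I011 Φ n) x v
      = (1/2) * fderiv ℝ (I11 Φ n) x v - (1/2) * fderiv ℝ (I22 Φ n) x v := by
  have hd1 := diffAt_of_contDiffOn hU (smooth_I11 hU h) hx
  have hd2 := diffAt_of_contDiffOn hU (smooth_I22 hU h) hx
  have hstep : I011 Φ n = fun y => (1/2) * I11 Φ n y - (1/2) * I22 Φ n y := by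
    funext y
    show (I11 Φ n y - I22 Φ n y)/2 = _
    ring
  rw [hstep, fderiv_comb hd1 hd2]

lemma key1 (hU : IsOpen U) (h : IsConformalImmersionS3 U Φ lam n) (hx : x ∈ U) :
    exp (2 * lam x) * fderiv ℝ (meanCurv Φ lam n) x ((1:ℝ),(0:ℝ))
      = fderiv ℝ (I011 Φ n) x ((1:ℝ),(0:ℝ)) + fderiv ℝ (I12 Φ n) x ((0:ℝ),(1:ℝ)) := by
  have hdH := dH hU h hx ((1:ℝ),(0:ℝ))
  have hcod := codazzi2 hU h hx
  have hI := dI011 hU h hx ((1:ℝ),(0:ℝ))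
  have hee : exp (2 * lam x) * exp (-(2 * lam x)) = 1 := by rw [← exp_add]; simp
  linear_combination exp (2 * lam x) * hdH
    + ((1/2) * (fderiv ℝ (I11 Φ n) x ((1:ℝ),(0:ℝ)) + fderiv ℝ (I22 Φ n) x ((1:ℝ),(0:ℝ)))
        - (I11 Φ n x + I22 Φ n x) * fderiv ℝ lam x ((1:ℝ),(0:ℝ))) * hee
    + hcod - hI

lemma key2 (hU : IsOpen U) (h : IsConformalImmersionS3 U Φ lam n) (hx : x ∈ U) :
    exp (2 * lam x) * fderiv ℝ (meanCurv Φ lam n) x ((0:ℝ),(1:ℝ))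
      = -fderiv ℝ (I011 Φ n) x ((0:ℝ),(1:ℝ)) + fderiv ℝ (I12 Φ n) x ((1:ℝ),(0:ℝ)) := by
  have hdH := dH hU h hx ((0:ℝ),(1:ℝ))
  have hcod := codazzi1 hU h hx
  have hI := dI011 hU h hx ((0:ℝ),(1:ℝ))
  have hee : exp (2 * lam x) * exp (-(2 * lam x)) = 1 := by rw [← exp_add]; simp
  linear_combination exp (2 * lam x) * hdH
    + ((1/2) * (fderiv ℝ (I11 Φ n) x ((0:ℝ),(1:ℝ)) + fderiv ℝ (I22 Φ n) x ((0:ℝ),(1:ℝ)))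
        - (I11 Φ n x + I22 Φ n x) * fderiv ℝ lam x ((0:ℝ),(1:ℝ))) * hee
    + hcod + hI

end CMSkey


/-- If a smooth conformal immersion `Φ : U → S³` satisfies the
conformally constrained minimal surface equation `H = e^{-4λ} I⁰₁₁` on `U`, then
`u := e^{4λ}H` satisfies `Δu = ∂_{x₁}(e^{2λ}∂_{x₁}H) - ∂_{x₂}(e^{2λ}∂_{x₂}H)` on `U`. -/
theorem constrained_minimal_second_order_equation
    (U : Set RR2) (hU : IsOpen U)
    (Φ : RR2 → RR4) (lam : RR2 → ℝ) (n : RR2 → RR4)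
    (h : IsConformalImmersionS3 U Φ lam n)
    (hccms : ∀ x ∈ U, meanCurv Φ lam n x = exp (-(4 * lam x)) * I011 Φ n x) :
    ∀ x ∈ U,
      d1s (d1s (fun y => exp (4 * lam y) * meanCurv Φ lam n y)) x
        + d2s (d2s (fun y => exp (4 * lam y) * meanCurv Φ lam n y)) x
      = d1s (fun y => exp (2 * lam y) * d1s (meanCurv Φ lam n) y) x
        - d2s (fun y => exp (2 * lam y) * d2s (meanCurv Φ lam n) y) x := by
  intro x hx
  simp only [d1s_eq, d2s_eq]
  have hccms' : Set.EqOn (fun y => exp (4 * lam y) * meanCurv Φ lam n y) (I011 Φ n) U := by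
    intro y hy
    show exp (4 * lam y) * meanCurv Φ lam n y = I011 Φ n y
    rw [hccms y hy, ← mul_assoc, ← exp_add]
    simp
  have sI011 := smooth_I011 hU h
  have sI12 := smooth_I12 hU h
  have hdu1 : Set.EqOn
      (fun y => fderiv ℝ (fun z => exp (4 * lam z) * meanCurv Φ lam n z) y ((1:ℝ),(0:ℝ)))
      (fun y => fderiv ℝ (I011 Φ n) y ((1:ℝ),(0:ℝ))) U := by
    intro y hy
    show fderiv ℝ _ y _ = fderiv ℝ _ y _
    rw [fderiv_eqOn_congr hU hy hccms']
  have hdu2 : Set.EqOn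
      (fun y => fderiv ℝ (fun z => exp (4 * lam z) * meanCurv Φ lam n z) y ((0:ℝ),(1:ℝ)))
      (fun y => fderiv ℝ (I011 Φ n) y ((0:ℝ),(1:ℝ))) U := by
    intro y hy
    show fderiv ℝ _ y _ = fderiv ℝ _ y _
    rw [fderiv_eqOn_congr hU hy hccms']
  have hL1 : fderiv ℝ
      (fun y => fderiv ℝ (fun z => exp (4 * lam z) * meanCurv Φ lam n z) y ((1:ℝ),(0:ℝ))) x ((1:ℝ),(0:ℝ))
      = fderiv ℝ (fun y => fderiv ℝ (I011 Φ n) y ((1:ℝ),(0:ℝ))) x ((1:ℝ),(0:ℝ)) := by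
    rw [fderiv_eqOn_congr hU hx hdu1]
  have hL2 : fderiv ℝ
      (fun y => fderiv ℝ (fun z => exp (4 * lam z) * meanCurv Φ lam n z) y ((0:ℝ),(1:ℝ))) x ((0:ℝ),(1:ℝ))
      = fderiv ℝ (fun y => fderiv ℝ (I011 Φ n) y ((0:ℝ),(1:ℝ))) x ((0:ℝ),(1:ℝ)) := by
    rw [fderiv_eqOn_congr hU hx hdu2]
  have hG1 : Set.EqOn (fun y => exp (2 * lam y) * fderiv ℝ (meanCurv Φ lam n) y ((1:ℝ),(0:ℝ)))
      (fun y => fderiv ℝ (I011 Φ n) y ((1:ℝ),(0:ℝ)) + fderiv ℝ (I12 Φ n) y ((0:ℝ),(1:ℝ))) U :=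
    fun y hy => key1 hU h hy
  have hG2 : Set.EqOn (fun y => exp (2 * lam y) * fderiv ℝ (meanCurv Φ lam n) y ((0:ℝ),(1:ℝ)))
      (fun y => -fderiv ℝ (I011 Φ n) y ((0:ℝ),(1:ℝ)) + fderiv ℝ (I12 Φ n) y ((1:ℝ),(0:ℝ))) U :=
    fun y hy => key2 hU h hy
  have hR1 : fderiv ℝ
      (fun y => exp (2 * lam y) * fderiv ℝ (meanCurv Φ lam n) y ((1:ℝ),(0:ℝ))) x ((1:ℝ),(0:ℝ))
      = fderiv ℝ (fun y => fderiv ℝ (I011 Φ n) y ((1:ℝ),(0:ℝ))) x ((1:ℝ),(0:ℝ))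
        + fderiv ℝ (fun y => fderiv ℝ (I12 Φ n) y ((0:ℝ),(1:ℝ))) x ((1:ℝ),(0:ℝ)) := by
    rw [fderiv_eqOn_congr hU hx hG1,
      fderiv_fun_add (diffAt_of_contDiffOn hU (contDiffOn_fderiv_apply hU sI011 _) hx)
        (diffAt_of_contDiffOn hU (contDiffOn_fderiv_apply hU sI12 _) hx)]
    simp
  have hR2 : fderiv ℝ
      (fun y => exp (2 * lam y) * fderiv ℝ (meanCurv Φ lam n) y ((0:ℝ),(1:ℝ))) x ((0:ℝ),(1:ℝ))
      = -fderiv ℝ (fun y => fderiv ℝ (I011 Φ n) y ((0:ℝ),(1:ℝ))) x ((0:ℝ),(1:ℝ))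
        + fderiv ℝ (fun y => fderiv ℝ (I12 Φ n) y ((1:ℝ),(0:ℝ))) x ((0:ℝ),(1:ℝ)) := by
    rw [fderiv_eqOn_congr hU hx hG2,
      fderiv_fun_add (show DifferentiableAt ℝ (fun y => -fderiv ℝ (I011 Φ n) y ((0:ℝ),(1:ℝ))) x from
          (diffAt_of_contDiffOn hU (contDiffOn_fderiv_apply hU sI011 _) hx).neg)
        (diffAt_of_contDiffOn hU (contDiffOn_fderiv_apply hU sI12 _) hx)]
    simp [fderiv_neg]
  have hsymI12 : fderiv ℝ (fun y => fderiv ℝ (I12 Φ n) y ((0:ℝ),(1:ℝ))) x ((1:ℝ),(0:ℝ))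
      = fderiv ℝ (fun y => fderiv ℝ (I12 Φ n) y ((1:ℝ),(0:ℝ))) x ((0:ℝ),(1:ℝ)) :=
    fderiv_symm hU sI12 hx _ _
  rw [hL1, hL2, hR1, hR2]
  linarith [hsymI12]
end helpers
end
end

section
/- Let U ⊆ ℝ² be open and Φ : U → S³ ⊂ ℝ⁴ a smooth conformal immersion into S³ with conformal factor e^λ, mean curvature H and trace-free Weingarten coefficient I⁰₁₁, satisfying H = e^{−4λ} I⁰₁₁ on U. Then Φ satisfies the ℝ⁴-valued divergence-form equation ∂_{x₁}((1 − e^{−2λ}) ∂_{x₁}Φ) + ∂_{x₂}((1 + e^{−2λ}) ∂_{x₂}Φ) + 2 e^{2λ} Φ = 0 on U. -/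
noncomputable section

open Real MeasureTheory
open scoped ENNReal RealInnerProductSpace

/-! ### Auxiliary lemmas -/

private lemma span_orthogonal_zero {w : RR4} {v : Fin 4 → RR4}
    (hspan : Submodule.span ℝ (Set.range v) = ⊤)
    (hw : ∀ i, ⟪v i, w⟫ = 0) : w = 0 := by
  have hmem : w ∈ (Submodule.span ℝ (Set.range v))ᗮ := by
    rw [Submodule.mem_orthogonal]
    intro u hu
    induction hu using Submodule.span_induction with
    | mem u hu => obtain ⟨i, rfl⟩ := hu; exact hw i
    | zero => simp
    | add _ _ _ _ h1 h2 => simp [inner_add_left, h1, h2]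
    | smul c _ _ h => simp [inner_smul_left, h]
  rw [hspan, Submodule.top_orthogonal_eq_bot] at hmem
  simpa using hmem

/-- A vector of `ℝ⁴` orthogonal to four pairwise orthogonal nonzero vectors vanishes. -/
private lemma ortho_four (v0 v1 v2 v3 w : RR4)
    (n0 : v0 ≠ 0) (n1 : v1 ≠ 0) (n2 : v2 ≠ 0) (n3 : v3 ≠ 0)
    (h01 : ⟪v0, v1⟫ = 0) (h02 : ⟪v0, v2⟫ = 0) (h03 : ⟪v0, v3⟫ = 0)
    (h12 : ⟪v1, v2⟫ = 0) (h13 : ⟪v1, v3⟫ = 0) (h23 : ⟪v2, v3⟫ = 0)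
    (hw0 : ⟪v0, w⟫ = 0) (hw1 : ⟪v1, w⟫ = 0) (hw2 : ⟪v2, w⟫ = 0) (hw3 : ⟪v3, w⟫ = 0) :
    w = 0 := by
  have h10 : ⟪v1, v0⟫ = 0 := by rw [real_inner_comm]; exact h01
  have h20 : ⟪v2, v0⟫ = 0 := by rw [real_inner_comm]; exact h02
  have h30 : ⟪v3, v0⟫ = 0 := by rw [real_inner_comm]; exact h03
  have h21 : ⟪v2, v1⟫ = 0 := by rw [real_inner_comm]; exact h12
  have h31 : ⟪v3, v1⟫ = 0 := by rw [real_inner_comm]; exact h13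
  have h32 : ⟪v3, v2⟫ = 0 := by rw [real_inner_comm]; exact h23
  set u : Fin 4 → RR4 := ![‖v0‖⁻¹ • v0, ‖v1‖⁻¹ • v1, ‖v2‖⁻¹ • v2, ‖v3‖⁻¹ • v3] with hu
  have hself : ∀ z : RR4, z ≠ 0 → ‖z‖⁻¹ * (‖z‖⁻¹ * ∑ i, z i * z i) = 1 := by
    intro z hz
    have hs : (∑ i, z i * z i) = ‖z‖ ^ 2 := by
      rw [← real_inner_self_eq_norm_sq, PiLp.inner_apply]
      simp [sq]
    rw [hs]
    have hn : ‖z‖ ≠ 0 := norm_ne_zero_iff.2 hz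
    field_simp
  have hon : Orthonormal ℝ u := by
    rw [orthonormal_iff_ite]
    intro i j
    fin_cases i <;> fin_cases j <;>
      simp [hu, inner_smul_left, inner_smul_right, h01, h02, h03, h12, h13, h23,
        h10, h20, h30, h21, h31, h32, hself v0 n0, hself v1 n1, hself v2 n2, hself v3 n3,
          norm_smul, n0, n1, n2, n3]
  have hcard : Fintype.card (Fin 4) = Module.finrank ℝ RR4 := by
    simp [finrank_euclideanSpace_fin]
  have hspan := hon.linearIndependent.span_eq_top_of_card_eq_finrank hcard
  refine span_orthogonal_zero hspan ?_
  intro i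
  fin_cases i <;> simp [hu, inner_smul_left, hw0, hw1, hw2, hw3]

/-- If a smooth conformal immersion `Φ : U → S³` satisfies
`H = e^{-4λ} I⁰₁₁` on `U`, then it solves the `ℝ⁴`-valued divergence-form equation
`∂_{x₁}((1 - e^{-2λ})∂_{x₁}Φ) + ∂_{x₂}((1 + e^{-2λ})∂_{x₂}Φ) + 2 e^{2λ} Φ = 0` on `U`. -/
theorem constrained_minimal_divergence_form
    (U : Set RR2) (hU : IsOpen U)
    (Φ : RR2 → RR4) (lam : RR2 → ℝ) (n : RR2 → RR4)
    (h : IsConformalImmersionS3 U Φ lam n)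
    (hccms : ∀ x ∈ U, meanCurv Φ lam n x = exp (-(4 * lam x)) * I011 Φ n x) :
    ∀ x ∈ U,
      d1 (fun y => (1 - exp (-(2 * lam y))) • d1 Φ y) x
        + d2 (fun y => (1 + exp (-(2 * lam y))) • d2 Φ y) x
        + (2 * exp (2 * lam x)) • Φ x = 0 := by
  intro x hx
  classical
  -- pointwise smoothness
  have hΦat : ∀ y ∈ U, ContDiffAt ℝ (⊤ : ℕ∞) Φ y :=
    fun y hy => h.smooth_Phi.contDiffAt (hU.mem_nhds hy)
  have hlamat : ∀ y ∈ U, ContDiffAt ℝ (⊤ : ℕ∞) lam y :=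
    fun y hy => h.smooth_lam.contDiffAt (hU.mem_nhds hy)
  have hfd : ∀ y ∈ U, ContDiffAt ℝ (⊤ : ℕ∞) (fderiv ℝ Φ) y :=
    fun y hy => (hΦat y hy).fderiv_right (by simp)
  have hd1at : ∀ y ∈ U, ContDiffAt ℝ (⊤ : ℕ∞) (d1 Φ) y := fun y hy =>
    (ContinuousLinearMap.apply ℝ RR4 ((1 : ℝ), (0 : ℝ))).contDiff.comp_contDiffAt y (hfd y hy)
  have hd2at : ∀ y ∈ U, ContDiffAt ℝ (⊤ : ℕ∞) (d2 Φ) y := fun y hy =>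
    (ContinuousLinearMap.apply ℝ RR4 ((0 : ℝ), (1 : ℝ))).contDiff.comp_contDiffAt y (hfd y hy)
  have hΦd : ∀ y ∈ U, DifferentiableAt ℝ Φ y :=
    fun y hy => (hΦat y hy).differentiableAt (by simp)
  have hd1d : ∀ y ∈ U, DifferentiableAt ℝ (d1 Φ) y :=
    fun y hy => (hd1at y hy).differentiableAt (by simp)
  have hd2d : ∀ y ∈ U, DifferentiableAt ℝ (d2 Φ) y :=
    fun y hy => (hd2at y hy).differentiableAt (by simp)
  have hlamd : ∀ y ∈ U, DifferentiableAt ℝ lam y :=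
    fun y hy => (hlamat y hy).differentiableAt (by simp)
  -- equality of derivatives of functions agreeing on U
  have hfder_eq : ∀ (p q : RR2 → ℝ), (∀ y ∈ U, p y = q y) → ∀ y ∈ U,
      fderiv ℝ p y = fderiv ℝ q y := fun p q hpq y hy =>
    Filter.EventuallyEq.fderiv_eq (Filter.eventuallyEq_of_mem (hU.mem_nhds hy) hpq)
  -- first order identities on U
  have hPhiPhi : ∀ y ∈ U, ⟪Φ y, Φ y⟫ = (1 : ℝ) := by
    intro y hy
    rw [real_inner_self_eq_norm_sq, h.mem_sphere y hy]
    norm_num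
  have hPhiD : ∀ y ∈ U, ∀ v : RR2, ⟪Φ y, fderiv ℝ Φ y v⟫ = 0 := by
    intro y hy v
    have hde := hfder_eq (fun t => ⟪Φ t, Φ t⟫) (fun _ => (1 : ℝ)) hPhiPhi y hy
    have h1 : fderiv ℝ (fun t => ⟪Φ t, Φ t⟫) y v = 0 := by rw [hde]; simp
    rw [fderiv_inner_apply ℝ (hΦd y hy) (hΦd y hy)] at h1
    linarith [real_inner_comm (Φ y) (fderiv ℝ Φ y v)]
  have hPhi1 : ∀ y ∈ U, ⟪Φ y, d1 Φ y⟫ = 0 := fun y hy => hPhiD y hy (1, 0)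
  have hPhi2 : ∀ y ∈ U, ⟪Φ y, d2 Φ y⟫ = 0 := fun y hy => hPhiD y hy (0, 1)
  have hd1sq : ∀ y ∈ U, ⟪d1 Φ y, d1 Φ y⟫ = exp (2 * lam y) := by
    intro y hy
    rw [real_inner_self_eq_norm_sq, h.conf_norm1 y hy, sq, ← Real.exp_add]
    ring_nf
  have hd2sq : ∀ y ∈ U, ⟪d2 Φ y, d2 Φ y⟫ = exp (2 * lam y) := by
    intro y hy
    rw [real_inner_self_eq_norm_sq, h.conf_norm2 y hy, sq, ← Real.exp_add]
    ring_nf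
  -- handy rewriting lemmas
  have r1 : ∀ f : RR2 → RR4, fderiv ℝ f x (1, 0) = d1 f x := fun _ => rfl
  have r2 : ∀ f : RR2 → RR4, fderiv ℝ f x (0, 1) = d2 f x := fun _ => rfl
  have rs1 : fderiv ℝ lam x (1, 0) = d1s lam x := rfl
  have rs2 : fderiv ℝ lam x (0, 1) = d2s lam x := rfl
  -- symmetry of second derivatives
  have hdfd : DifferentiableAt ℝ (fderiv ℝ Φ) x := (hfd x hx).differentiableAt (by simp)
  have heval : ∀ v w : RR2, fderiv ℝ (fun y => fderiv ℝ Φ y v) x w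
      = fderiv ℝ (fderiv ℝ Φ) x w v := by
    intro v w
    have hc : HasFDerivAt (fun y => (ContinuousLinearMap.apply ℝ RR4 v) (fderiv ℝ Φ y))
        ((ContinuousLinearMap.apply ℝ RR4 v).comp (fderiv ℝ (fderiv ℝ Φ) x)) x :=
      (ContinuousLinearMap.apply ℝ RR4 v).hasFDerivAt.comp x hdfd.hasFDerivAt
    have h1 : fderiv ℝ (fun y => fderiv ℝ Φ y v) x
        = (ContinuousLinearMap.apply ℝ RR4 v).comp (fderiv ℝ (fderiv ℝ Φ) x) := hc.fderiv
    rw [h1]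
    rfl
  have hsymm : IsSymmSndFDerivAt ℝ Φ x :=
    (hΦat x hx).isSymmSndFDerivAt
      (le_trans (by norm_num) (WithTop.coe_le_coe.2 (le_top : (2 : ℕ∞) ≤ ⊤)))
  have hswap : d1 (d2 Φ) x = d2 (d1 Φ) x := by
    have e1 : d1 (d2 Φ) x = fderiv ℝ (fderiv ℝ Φ) x (1, 0) (0, 1) := heval (0, 1) (1, 0)
    have e2 : d2 (d1 Φ) x = fderiv ℝ (fderiv ℝ Φ) x (0, 1) (1, 0) := heval (1, 0) (0, 1)
    rw [e1, e2]
    exact hsymm.eq _ _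
  -- second order identities at x
  have hPA11 : ⟪Φ x, d1 (d1 Φ) x⟫ = -exp (2 * lam x) := by
    have hde := hfder_eq (fun t => ⟪Φ t, d1 Φ t⟫) (fun _ => (0 : ℝ)) hPhi1 x hx
    have h1 : fderiv ℝ (fun t => ⟪Φ t, d1 Φ t⟫) x (1, 0) = 0 := by rw [hde]; simp
    rw [fderiv_inner_apply ℝ (hΦd x hx) (hd1d x hx)] at h1
    rw [r1, r1] at h1
    linarith [h1, hd1sq x hx]
  have hPA22 : ⟪Φ x, d2 (d2 Φ) x⟫ = -exp (2 * lam x) := by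
    have hde := hfder_eq (fun t => ⟪Φ t, d2 Φ t⟫) (fun _ => (0 : ℝ)) hPhi2 x hx
    have h1 : fderiv ℝ (fun t => ⟪Φ t, d2 Φ t⟫) x (0, 1) = 0 := by rw [hde]; simp
    rw [fderiv_inner_apply ℝ (hΦd x hx) (hd2d x hx)] at h1
    rw [r2, r2] at h1
    linarith [h1, hd2sq x hx]
  -- derivative of exp (2 lam)
  have hexp2 : HasFDerivAt (fun t => Real.exp (2 * lam t))
      (Real.exp (2 * lam x) • ((2 : ℝ) • fderiv ℝ lam x)) x :=
    (Real.hasDerivAt_exp _).comp_hasFDerivAt x ((hlamd x hx).hasFDerivAt.const_mul 2)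
  have hder_exp : ∀ v, fderiv ℝ (fun t => Real.exp (2 * lam t)) x v
      = Real.exp (2 * lam x) * (2 * fderiv ℝ lam x v) := by
    intro v
    rw [hexp2.fderiv]
    simp
  have h1A11 : ⟪d1 Φ x, d1 (d1 Φ) x⟫ = d1s lam x * exp (2 * lam x) := by
    have hde := hfder_eq (fun t => ⟪d1 Φ t, d1 Φ t⟫) (fun t => Real.exp (2 * lam t)) hd1sq x hx
    have h1 : fderiv ℝ (fun t => ⟪d1 Φ t, d1 Φ t⟫) x (1, 0)
        = fderiv ℝ (fun t => Real.exp (2 * lam t)) x (1, 0) := by rw [hde]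
    rw [fderiv_inner_apply ℝ (hd1d x hx) (hd1d x hx), hder_exp, rs1, r1] at h1
    linarith [real_inner_comm (d1 Φ x) (d1 (d1 Φ) x)]
  have h1A21 : ⟪d1 Φ x, d2 (d1 Φ) x⟫ = d2s lam x * exp (2 * lam x) := by
    have hde := hfder_eq (fun t => ⟪d1 Φ t, d1 Φ t⟫) (fun t => Real.exp (2 * lam t)) hd1sq x hx
    have h1 : fderiv ℝ (fun t => ⟪d1 Φ t, d1 Φ t⟫) x (0, 1)
        = fderiv ℝ (fun t => Real.exp (2 * lam t)) x (0, 1) := by rw [hde]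
    rw [fderiv_inner_apply ℝ (hd1d x hx) (hd1d x hx), hder_exp, rs2, r2] at h1
    linarith [real_inner_comm (d1 Φ x) (d2 (d1 Φ) x)]
  have h2A12 : ⟪d2 Φ x, d1 (d2 Φ) x⟫ = d1s lam x * exp (2 * lam x) := by
    have hde := hfder_eq (fun t => ⟪d2 Φ t, d2 Φ t⟫) (fun t => Real.exp (2 * lam t)) hd2sq x hx
    have h1 : fderiv ℝ (fun t => ⟪d2 Φ t, d2 Φ t⟫) x (1, 0)
        = fderiv ℝ (fun t => Real.exp (2 * lam t)) x (1, 0) := by rw [hde]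
    rw [fderiv_inner_apply ℝ (hd2d x hx) (hd2d x hx), hder_exp, rs1, r1] at h1
    linarith [real_inner_comm (d2 Φ x) (d1 (d2 Φ) x)]
  have h2A22 : ⟪d2 Φ x, d2 (d2 Φ) x⟫ = d2s lam x * exp (2 * lam x) := by
    have hde := hfder_eq (fun t => ⟪d2 Φ t, d2 Φ t⟫) (fun t => Real.exp (2 * lam t)) hd2sq x hx
    have h1 : fderiv ℝ (fun t => ⟪d2 Φ t, d2 Φ t⟫) x (0, 1)
        = fderiv ℝ (fun t => Real.exp (2 * lam t)) x (0, 1) := by rw [hde]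
    rw [fderiv_inner_apply ℝ (hd2d x hx) (hd2d x hx), hder_exp, rs2, r2] at h1
    linarith [real_inner_comm (d2 Φ x) (d2 (d2 Φ) x)]
  -- mixed orthogonality second derivatives
  have horth1 : ⟪d1 Φ x, d1 (d2 Φ) x⟫ + ⟪d1 (d1 Φ) x, d2 Φ x⟫ = 0 := by
    have hde := hfder_eq (fun t => ⟪d1 Φ t, d2 Φ t⟫) (fun _ => (0 : ℝ)) h.conf_orth x hx
    have h1 : fderiv ℝ (fun t => ⟪d1 Φ t, d2 Φ t⟫) x (1, 0) = 0 := by rw [hde]; simp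
    rw [fderiv_inner_apply ℝ (hd1d x hx) (hd2d x hx), r1, r1] at h1
    linarith
  have horth2 : ⟪d1 Φ x, d2 (d2 Φ) x⟫ + ⟪d2 (d1 Φ) x, d2 Φ x⟫ = 0 := by
    have hde := hfder_eq (fun t => ⟪d1 Φ t, d2 Φ t⟫) (fun _ => (0 : ℝ)) h.conf_orth x hx
    have h1 : fderiv ℝ (fun t => ⟪d1 Φ t, d2 Φ t⟫) x (0, 1) = 0 := by rw [hde]; simp
    rw [fderiv_inner_apply ℝ (hd1d x hx) (hd2d x hx), r2, r2] at h1
    linarith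
  have h1A22 : ⟪d1 Φ x, d2 (d2 Φ) x⟫ = -(d1s lam x * exp (2 * lam x)) := by
    have e : ⟪d2 (d1 Φ) x, d2 Φ x⟫ = d1s lam x * exp (2 * lam x) := by
      rw [← hswap, real_inner_comm]
      exact h2A12
    linarith [horth2]
  have h2A11 : ⟪d2 Φ x, d1 (d1 Φ) x⟫ = -(d2s lam x * exp (2 * lam x)) := by
    have e : ⟪d1 Φ x, d1 (d2 Φ) x⟫ = d2s lam x * exp (2 * lam x) := by
      rw [hswap]
      exact h1A21
    rw [real_inner_comm]
    linarith [horth1]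
  -- product rule for the two divergence terms
  have hexpneg : HasFDerivAt (fun t => Real.exp (-(2 * lam t)))
      (Real.exp (-(2 * lam x)) • -((2 : ℝ) • fderiv ℝ lam x)) x :=
    (Real.hasDerivAt_exp _).comp_hasFDerivAt x ((hlamd x hx).hasFDerivAt.const_mul 2).neg
  have hT1 : d1 (fun y => (1 - Real.exp (-(2 * lam y))) • d1 Φ y) x
      = (2 * d1s lam x * Real.exp (-(2 * lam x))) • d1 Φ x
        + (1 - Real.exp (-(2 * lam x))) • d1 (d1 Φ) x := by
    have hs := ((hexpneg.const_sub 1).smul (hd1d x hx).hasFDerivAt).fderiv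
    show fderiv ℝ (fun y => (1 - Real.exp (-(2 * lam y))) • d1 Φ y) x (1, 0) = _
    rw [show (fun y => (1 - Real.exp (-(2 * lam y))) • d1 Φ y)
      = (fun y => 1 - Real.exp (-(2 * lam y))) • d1 Φ from rfl, hs]
    simp only [ContinuousLinearMap.add_apply, ContinuousLinearMap.coe_smul', Pi.smul_apply,
      ContinuousLinearMap.smulRight_apply, ContinuousLinearMap.neg_apply,
      ContinuousLinearMap.smul_apply, r1, rs1, smul_eq_mul]
    module
  have hT2 : d2 (fun y => (1 + Real.exp (-(2 * lam y))) • d2 Φ y) x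
      = (-(2 * d2s lam x * Real.exp (-(2 * lam x)))) • d2 Φ x
        + (1 + Real.exp (-(2 * lam x))) • d2 (d2 Φ) x := by
    have hs := ((hexpneg.const_add 1).smul (hd2d x hx).hasFDerivAt).fderiv
    show fderiv ℝ (fun y => (1 + Real.exp (-(2 * lam y))) • d2 Φ y) x (0, 1) = _
    rw [show (fun y => (1 + Real.exp (-(2 * lam y))) • d2 Φ y)
      = (fun y => 1 + Real.exp (-(2 * lam y))) • d2 Φ from rfl, hs]
    simp only [ContinuousLinearMap.add_apply, ContinuousLinearMap.coe_smul', Pi.smul_apply,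
      ContinuousLinearMap.smulRight_apply, ContinuousLinearMap.neg_apply,
      ContinuousLinearMap.smul_apply, r2, rs2, smul_eq_mul]
    module
  -- the constrained equation
  have hmu_pos : (0 : ℝ) < Real.exp (-(2 * lam x)) := Real.exp_pos _
  have hsum : I11 Φ n x + I22 Φ n x
      = Real.exp (-(2 * lam x)) * (I11 Φ n x - I22 Φ n x) := by
    have hc := hccms x hx
    unfold meanCurv I011 at hc
    have h4 : Real.exp (-(4 * lam x))
        = Real.exp (-(2 * lam x)) * Real.exp (-(2 * lam x)) := by
      rw [← Real.exp_add]
      ring_nf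
    rw [h4] at hc
    have h2 : Real.exp (-(2 * lam x)) * (I11 Φ n x + I22 Φ n x)
        = Real.exp (-(2 * lam x)) * (Real.exp (-(2 * lam x)) * (I11 Φ n x - I22 Φ n x)) := by
      linear_combination 2 * hc
    exact mul_left_cancel₀ (ne_of_gt hmu_pos) h2
  -- frame data
  have hP_ne : Φ x ≠ 0 := by
    intro h0
    have := h.mem_sphere x hx
    rw [h0, norm_zero] at this
    norm_num at this
  have hP1_ne : d1 Φ x ≠ 0 := by
    intro h0
    have := h.conf_norm1 x hx
    rw [h0, norm_zero] at this
    exact absurd this.symm (ne_of_gt (Real.exp_pos _))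
  have hP2_ne : d2 Φ x ≠ 0 := by
    intro h0
    have := h.conf_norm2 x hx
    rw [h0, norm_zero] at this
    exact absurd this.symm (ne_of_gt (Real.exp_pos _))
  have hN_ne : n x ≠ 0 := by
    intro h0
    have := h.n_norm x hx
    rw [h0, norm_zero] at this
    norm_num at this
  have hPN : ⟪Φ x, n x⟫ = 0 := by rw [real_inner_comm]; exact h.n_orth_Phi x hx
  have hP1N : ⟪d1 Φ x, n x⟫ = 0 := by rw [real_inner_comm]; exact h.n_orth_d1 x hx
  have hP2N : ⟪d2 Φ x, n x⟫ = 0 := by rw [real_inner_comm]; exact h.n_orth_d2 x hx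
  have h1P : ⟪d1 Φ x, Φ x⟫ = 0 := by rw [real_inner_comm]; exact hPhi1 x hx
  have h2P : ⟪d2 Φ x, Φ x⟫ = 0 := by rw [real_inner_comm]; exact hPhi2 x hx
  have h2P1 : ⟪d2 Φ x, d1 Φ x⟫ = 0 := by rw [real_inner_comm]; exact h.conf_orth x hx
  have hNA11 : ⟪n x, d1 (d1 Φ) x⟫ = I11 Φ n x := rfl
  have hNA22 : ⟪n x, d2 (d2 Φ) x⟫ = I22 Φ n x := rfl
  have hNP1 : ⟪n x, d1 Φ x⟫ = 0 := h.n_orth_d1 x hx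
  have hNP2 : ⟪n x, d2 Φ x⟫ = 0 := h.n_orth_d2 x hx
  have hNP : ⟪n x, Φ x⟫ = 0 := h.n_orth_Phi x hx
  -- assemble
  rw [hT1, hT2]
  apply ortho_four (Φ x) (d1 Φ x) (d2 Φ x) (n x) _ hP_ne hP1_ne hP2_ne hN_ne
    (hPhi1 x hx) (hPhi2 x hx) hPN (h.conf_orth x hx) hP1N hP2N
  · simp only [inner_add_right, real_inner_smul_right, hPhi1 x hx, hPhi2 x hx, hPA11, hPA22,
      hPhiPhi x hx]
    ring
  · simp only [inner_add_right, real_inner_smul_right, hd1sq x hx, h.conf_orth x hx, h1A11,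
      h1A22, h1P]
    ring
  · simp only [inner_add_right, real_inner_smul_right, hd2sq x hx, h2P1, h2A11, h2A22, h2P]
    ring
  · simp only [inner_add_right, real_inner_smul_right, hNA11, hNA22, hNP1, hNP2, hNP]
    linear_combination hsum
end
end

section
/- (Conservation laws for isothermic conformally constrained minimal immersions.) Let U ⊆ ℝ² be open and Φ : U → S³ ⊂ ℝ⁴ a smooth conformal immersion into S³ with conformal factor e^λ, mean curvature H and trace-free Weingarten coefficients I⁰₁₁, I⁰₁₂. Suppose there is a constant t ∈ ℝ such that on U: H = e^{−4λ} I⁰₁₁ and I⁰₁₂ = −t · I⁰₁₁. Then, writing G := I⁰₁₁, the following conservation laws hold on U: ∂_{x₁}[ (1 + t² − e^{−4λ}) G ] = 2 ∂_{x₁}(e^{−2λ}) G − 2t ∂_{x₂}(e^{−2λ}) G and ∂_{x₂}[ (1 + t² − e^{−4λ}) G ] = −2t ∂_{x₁}(e^{−2λ}) G − 2 ∂_{x₂}(e^{−2λ}) G. -/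
noncomputable section

open Real MeasureTheory
open scoped ENNReal RealInnerProductSpace

/-! ### Auxiliary lemmas -/

section Aux

lemma contDiffOn_d1 {f : RR2 → RR4} {U : Set RR2} (hU : IsOpen U)
    (hf : ContDiffOn ℝ (⊤:ℕ∞) f U) : ContDiffOn ℝ (⊤:ℕ∞) (d1 f) U :=
  (hf.fderiv_of_isOpen hU (by exact_mod_cast le_top)).clm_apply contDiffOn_const

lemma contDiffOn_d2 {f : RR2 → RR4} {U : Set RR2} (hU : IsOpen U)
    (hf : ContDiffOn ℝ (⊤:ℕ∞) f U) : ContDiffOn ℝ (⊤:ℕ∞) (d2 f) U :=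
  (hf.fderiv_of_isOpen hU (by exact_mod_cast le_top)).clm_apply contDiffOn_const

lemma diffAt_of_cd {E F : Type*} [NormedAddCommGroup E] [NormedSpace ℝ E]
    [NormedAddCommGroup F] [NormedSpace ℝ F] {f : E → F} {U : Set E} {x : E}
    (hU : IsOpen U) (hf : ContDiffOn ℝ (⊤:ℕ∞) f U) (hx : x ∈ U) :
    DifferentiableAt ℝ f x :=
  (hf.contDiffAt (hU.mem_nhds hx)).differentiableAt (by simp)

lemma symm_d12 {f : RR2 → RR4} {U : Set RR2} {x : RR2} (hU : IsOpen U)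
    (hf : ContDiffOn ℝ (⊤:ℕ∞) f U) (hx : x ∈ U) :
    d1 (d2 f) x = d2 (d1 f) x := by
  have hdf : ContDiffOn ℝ (⊤:ℕ∞) (fderiv ℝ f) U :=
    hf.fderiv_of_isOpen hU (by exact_mod_cast le_top)
  have hdfx : DifferentiableAt ℝ (fderiv ℝ f) x := diffAt_of_cd hU hdf hx
  have hsymm : ∀ v w, fderiv ℝ (fderiv ℝ f) x v w = fderiv ℝ (fderiv ℝ f) x w v := by
    apply second_derivative_symmetric_of_eventually (f := f)
    · filter_upwards [hU.eventually_mem hx] with y hy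
      exact (diffAt_of_cd hU hf hy).hasFDerivAt
    · exact hdfx.hasFDerivAt
  have e1 : ∀ (v w : RR2), fderiv ℝ (fun y => fderiv ℝ f y v) x w
      = fderiv ℝ (fderiv ℝ f) x w v := by
    intro v w
    rw [fderiv_clm_apply hdfx (differentiableAt_const v)]
    simp
  show fderiv ℝ (fun y => fderiv ℝ f y (0,1)) x (1,0)
      = fderiv ℝ (fun y => fderiv ℝ f y (1,0)) x (0,1)
  rw [e1, e1, hsymm]

set_option maxHeartbeats 1000000 in
lemma parseval4 (p e1 e2 nn : RR4) (s : ℝ) (hs : 0 < s)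
    (hp : ⟪p,p⟫ = 1) (h11 : ⟪e1,e1⟫ = s^2) (h22 : ⟪e2,e2⟫ = s^2) (hnn : ⟪nn,nn⟫ = 1)
    (hp1 : ⟪p,e1⟫ = 0) (hp2 : ⟪p,e2⟫ = 0) (hpn : ⟪p,nn⟫ = 0) (h12 : ⟪e1,e2⟫ = 0)
    (h1n : ⟪e1,nn⟫ = 0) (h2n : ⟪e2,nn⟫ = 0) (v w : RR4) :
    ⟪v,w⟫ = ⟪v,p⟫*⟪p,w⟫ + (⟪v,e1⟫*⟪e1,w⟫ + ⟪v,e2⟫*⟪e2,w⟫)/s^2 + ⟪v,nn⟫*⟪nn,w⟫ := by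
  have hs0 : s ≠ 0 := ne_of_gt hs
  set b : Fin 4 → RR4 := ![p, s⁻¹ • e1, s⁻¹ • e2, nn] with hb
  have horth : Orthonormal ℝ b := by
    rw [orthonormal_iff_ite]
    intro i j
    have comm : ∀ u v : RR4, ⟪u,v⟫ = ⟪v,u⟫ := fun u v => (real_inner_comm v u)
    fin_cases i <;> fin_cases j
    · show ⟪p, p⟫ = 1; exact hp
    · show ⟪p, s⁻¹ • e1⟫ = 0; rw [real_inner_smul_right, hp1]; ring
    · show ⟪p, s⁻¹ • e2⟫ = 0; rw [real_inner_smul_right, hp2]; ring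
    · show ⟪p, nn⟫ = 0; exact hpn
    · show ⟪s⁻¹ • e1, p⟫ = 0; rw [real_inner_smul_left, comm e1 p, hp1]; ring
    · show ⟪s⁻¹ • e1, s⁻¹ • e1⟫ = 1
      rw [real_inner_smul_left, real_inner_smul_right, h11]; field_simp
    · show ⟪s⁻¹ • e1, s⁻¹ • e2⟫ = 0
      rw [real_inner_smul_left, real_inner_smul_right, h12]; ring
    · show ⟪s⁻¹ • e1, nn⟫ = 0; rw [real_inner_smul_left, h1n]; ring
    · show ⟪s⁻¹ • e2, p⟫ = 0; rw [real_inner_smul_left, comm e2 p, hp2]; ring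
    · show ⟪s⁻¹ • e2, s⁻¹ • e1⟫ = 0
      rw [real_inner_smul_left, real_inner_smul_right, comm e2 e1, h12]; ring
    · show ⟪s⁻¹ • e2, s⁻¹ • e2⟫ = 1
      rw [real_inner_smul_left, real_inner_smul_right, h22]; field_simp
    · show ⟪s⁻¹ • e2, nn⟫ = 0; rw [real_inner_smul_left, h2n]; ring
    · show ⟪nn, p⟫ = 0; rw [comm nn p]; exact hpn
    · show ⟪nn, s⁻¹ • e1⟫ = 0; rw [real_inner_smul_right, comm nn e1, h1n]; ring
    · show ⟪nn, s⁻¹ • e2⟫ = 0; rw [real_inner_smul_right, comm nn e2, h2n]; ring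
    · show ⟪nn, nn⟫ = 1; exact hnn
  have hcard : Fintype.card (Fin 4) = Module.finrank ℝ RR4 := by simp
  have hspan : ⊤ ≤ Submodule.span ℝ (Set.range b) :=
    (horth.linearIndependent.span_eq_top_of_card_eq_finrank hcard).ge
  let B : OrthonormalBasis (Fin 4) ℝ RR4 := OrthonormalBasis.mk horth hspan
  have hB : ∀ i, B i = b i := fun i => by simp [B, OrthonormalBasis.coe_mk]
  have key := B.sum_inner_mul_inner v w
  rw [Fin.sum_univ_four, hB 0, hB 1, hB 2, hB 3] at key
  have b0 : b 0 = p := rfl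
  have b1 : b 1 = s⁻¹ • e1 := rfl
  have b2 : b 2 = s⁻¹ • e2 := rfl
  have b3 : b 3 = nn := rfl
  rw [b0, b1, b2, b3, real_inner_smul_left, real_inner_smul_left,
    real_inner_smul_right, real_inner_smul_right] at key
  rw [← key]
  field_simp
  ring

lemma fderiv_congr_on {F : Type*} [NormedAddCommGroup F] [NormedSpace ℝ F]
    {f g : RR2 → F} {U : Set RR2} {x : RR2} (hU : IsOpen U)
    (h : ∀ y ∈ U, f y = g y) (hx : x ∈ U) : fderiv ℝ f x = fderiv ℝ g x :=
  Filter.EventuallyEq.fderiv_eq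
    (Filter.eventuallyEq_of_mem (hU.mem_nhds hx) (fun y hy => h y hy))

lemma inner_deriv_formula {f g : RR2 → RR4} {c : RR2 → ℝ} {U : Set RR2} {x : RR2}
    (hU : IsOpen U) (hx : x ∈ U)
    (hf : DifferentiableAt ℝ f x) (hg : DifferentiableAt ℝ g x)
    (heq : ∀ y ∈ U, ⟪f y, g y⟫ = c y) (v : RR2) :
    ⟪f x, fderiv ℝ g x v⟫ + ⟪fderiv ℝ f x v, g x⟫ = fderiv ℝ c x v := by
  rw [← fderiv_inner_apply ℝ hf hg v, fderiv_congr_on hU heq hx]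

lemma fderiv_mul_apply' {f g : RR2 → ℝ} {x : RR2} (hf : DifferentiableAt ℝ f x)
    (hg : DifferentiableAt ℝ g x) (v : RR2) :
    fderiv ℝ (fun y => f y * g y) x v = f x * fderiv ℝ g x v + g x * fderiv ℝ f x v := by
  rw [fderiv_fun_mul hf hg]; simp

lemma fderiv_exp_mul_s18 {lam : RR2 → ℝ} {x : RR2} (h : DifferentiableAt ℝ lam x)
    (a : ℝ) (v : RR2) :
    fderiv ℝ (fun y => Real.exp (a * lam y)) x v
      = a * Real.exp (a * lam x) * fderiv ℝ lam x v := by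
  rw [fderiv_exp (h.const_mul a), fderiv_const_mul h a]
  simp; ring

end Aux

set_option maxHeartbeats 2000000 in
/-- **conservation laws for isothermic conformally constrained minimal
immersions.** If a smooth conformal immersion `Φ : U → S³` satisfies `H = e^{-4λ} I⁰₁₁`
and `I⁰₁₂ = -t I⁰₁₁` for a constant `t`, then with `G := I⁰₁₁`:
`∂_{x₁}[(1+t²-e^{-4λ})G] = 2∂_{x₁}(e^{-2λ})G - 2t∂_{x₂}(e^{-2λ})G` and
`∂_{x₂}[(1+t²-e^{-4λ})G] = -2t∂_{x₁}(e^{-2λ})G - 2∂_{x₂}(e^{-2λ})G` on `U`. -/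
theorem isothermic_conservation_laws
    (U : Set RR2) (hU : IsOpen U)
    (Φ : RR2 → RR4) (lam : RR2 → ℝ) (n : RR2 → RR4)
    (h : IsConformalImmersionS3 U Φ lam n)
    (t : ℝ)
    (hccms : ∀ x ∈ U, meanCurv Φ lam n x = exp (-(4 * lam x)) * I011 Φ n x)
    (hiso : ∀ x ∈ U, I012 Φ n x = -t * I011 Φ n x) :
    ∀ x ∈ U,
      d1s (fun y => (1 + t ^ 2 - exp (-(4 * lam y))) * I011 Φ n y) x
        = 2 * d1s (fun y => exp (-(2 * lam y))) x * I011 Φ n x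
          - 2 * t * d2s (fun y => exp (-(2 * lam y))) x * I011 Φ n x ∧
      d2s (fun y => (1 + t ^ 2 - exp (-(4 * lam y))) * I011 Φ n y) x
        = -(2 * t) * d1s (fun y => exp (-(2 * lam y))) x * I011 Φ n x
          - 2 * d2s (fun y => exp (-(2 * lam y))) x * I011 Φ n x := by
  intro x hx
  -- smoothness of derived maps
  have cΦ1 : ContDiffOn ℝ (⊤:ℕ∞) (d1 Φ) U := contDiffOn_d1 hU h.smooth_Phi
  have cΦ2 : ContDiffOn ℝ (⊤:ℕ∞) (d2 Φ) U := contDiffOn_d2 hU h.smooth_Phi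
  have cΦ11 : ContDiffOn ℝ (⊤:ℕ∞) (d1 (d1 Φ)) U := contDiffOn_d1 hU cΦ1
  have cΦ21 : ContDiffOn ℝ (⊤:ℕ∞) (d2 (d1 Φ)) U := contDiffOn_d2 hU cΦ1
  have cΦ22 : ContDiffOn ℝ (⊤:ℕ∞) (d2 (d2 Φ)) U := contDiffOn_d2 hU cΦ2
  -- pointwise differentiability
  have dΦ : DifferentiableAt ℝ Φ x := diffAt_of_cd hU h.smooth_Phi hx
  have dlam : DifferentiableAt ℝ lam x := diffAt_of_cd hU h.smooth_lam hx
  have dn : DifferentiableAt ℝ n x := diffAt_of_cd hU h.smooth_n hx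
  have dΦ1 : DifferentiableAt ℝ (d1 Φ) x := diffAt_of_cd hU cΦ1 hx
  have dΦ2 : DifferentiableAt ℝ (d2 Φ) x := diffAt_of_cd hU cΦ2 hx
  have dΦ11 : DifferentiableAt ℝ (d1 (d1 Φ)) x := diffAt_of_cd hU cΦ11 hx
  have dΦ21 : DifferentiableAt ℝ (d2 (d1 Φ)) x := diffAt_of_cd hU cΦ21 hx
  have dΦ22 : DifferentiableAt ℝ (d2 (d2 Φ)) x := diffAt_of_cd hU cΦ22 hx
  -- abbreviations
  set P := Φ x with hP
  set E1 := d1 Φ x with hE1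
  set E2 := d2 Φ x with hE2
  set N := n x with hN
  set N1 := fderiv ℝ n x (1,0) with hN1def
  set N2 := fderiv ℝ n x (0,1) with hN2def
  set E11 := d1 (d1 Φ) x with hE11def
  set E21 := d2 (d1 Φ) x with hE21def
  set E12 := d1 (d2 Φ) x with hE12def
  set E22 := d2 (d2 Φ) x with hE22def
  set s := exp (lam x) with hsdef
  have hs : 0 < s := exp_pos _
  have hs0 : s ≠ 0 := ne_of_gt hs
  set l1 := fderiv ℝ lam x (1,0) with hl1def
  set l2 := fderiv ℝ lam x (0,1) with hl2def
  set A := exp (-(2 * lam x)) with hAdef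
  have hA0 : A ≠ 0 := (exp_pos _).ne'
  have hB : exp (-(4 * lam x)) = A^2 := by
    rw [hAdef, sq, ← Real.exp_add]; congr 1; ring
  -- symmetry of second derivatives
  have hsymm : ∀ y ∈ U, d1 (d2 Φ) y = d2 (d1 Φ) y :=
    fun y hy => symm_d12 hU h.smooth_Phi hy
  have hsymmx : E12 = E21 := hsymm x hx
  -- inner products of the frame at x
  have inner_norm : ∀ u : RR4, ⟪u,u⟫ = ‖u‖ * ‖u‖ := fun u => real_inner_self_eq_norm_mul_norm u
  have hPP : ⟪P,P⟫ = 1 := by rw [inner_norm, h.mem_sphere x hx]; norm_num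
  have hE1E1 : ⟪E1,E1⟫ = s^2 := by rw [inner_norm, h.conf_norm1 x hx]; ring
  have hE2E2 : ⟪E2,E2⟫ = s^2 := by rw [inner_norm, h.conf_norm2 x hx]; ring
  have hNNi : ⟪N,N⟫ = 1 := by rw [inner_norm, h.n_norm x hx]; norm_num
  have hE1E2 : ⟪E1,E2⟫ = 0 := h.conf_orth x hx
  have hPN : ⟪P,N⟫ = 0 := by rw [real_inner_comm]; exact h.n_orth_Phi x hx
  have hE1N : ⟪E1,N⟫ = 0 := by rw [real_inner_comm]; exact h.n_orth_d1 x hx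
  have hE2N : ⟪E2,N⟫ = 0 := by rw [real_inner_comm]; exact h.n_orth_d2 x hx
  have icomm : ∀ u v : RR4, ⟪u,v⟫ = ⟪v,u⟫ := fun u v => real_inner_comm v u
  -- generic: derivative of a constant inner product
  have hderivC : ∀ (f g : RR2 → RR4) (k : ℝ), DifferentiableAt ℝ f x → DifferentiableAt ℝ g x →
      (∀ y ∈ U, ⟪f y, g y⟫ = (fun _ : RR2 => k) y) → ∀ v : RR2,
      ⟪f x, fderiv ℝ g x v⟫ + ⟪fderiv ℝ f x v, g x⟫ = 0 := by
    intro f g k hf hg heq v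
    have h0 := inner_deriv_formula hU hx hf hg heq v
    simp only [fderiv_fun_const, Pi.zero_apply, ContinuousLinearMap.zero_apply] at h0
    exact h0
  -- ⟪P, E1⟫ = 0, ⟪P, E2⟫ = 0
  have hPhiPhi : ∀ y ∈ U, ⟪Φ y, Φ y⟫ = (fun _ : RR2 => (1:ℝ)) y := by
    intro y hy; rw [inner_norm, h.mem_sphere y hy]; norm_num
  have hPE1 : ⟪P,E1⟫ = 0 := by
    have h2 : ⟪P, E1⟫ + ⟪E1, P⟫ = 0 := hderivC Φ Φ 1 dΦ dΦ hPhiPhi (1,0)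
    linarith [h2, icomm E1 P]
  have hPE2 : ⟪P,E2⟫ = 0 := by
    have h2 : ⟪P, E2⟫ + ⟪E2, P⟫ = 0 := hderivC Φ Φ 1 dΦ dΦ hPhiPhi (0,1)
    linarith [h2, icomm E2 P]
  -- Parseval
  have hparse : ∀ v w : RR4, ⟪v,w⟫
      = ⟪v,P⟫*⟪P,w⟫ + (⟪v,E1⟫*⟪E1,w⟫ + ⟪v,E2⟫*⟪E2,w⟫)/s^2 + ⟪v,N⟫*⟪N,w⟫ :=
    parseval4 P E1 E2 N s hs hPP hE1E1 hE2E2 hNNi hPE1 hPE2 hPN hE1E2 hE1N hE2N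
  -- second fundamental form values
  set a11 := I11 Φ n x with ha11def
  set a12 := I12 Φ n x with ha12def
  set a22 := I22 Φ n x with ha22def
  have ha11 : ⟪N, E11⟫ = a11 := rfl
  have ha12 : ⟪N, E21⟫ = a12 := rfl
  have ha12' : ⟪N, E12⟫ = a12 := by rw [hsymmx]; rfl
  have ha22 : ⟪N, E22⟫ = a22 := rfl
  -- derivatives of n: Weingarten relations
  have hnPhiU : ∀ y ∈ U, ⟪n y, Φ y⟫ = (fun _ : RR2 => (0:ℝ)) y := fun y hy => h.n_orth_Phi y hy
  have hnnU : ∀ y ∈ U, ⟪n y, n y⟫ = (fun _ : RR2 => (1:ℝ)) y := by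
    intro y hy; rw [inner_norm, h.n_norm y hy]; norm_num
  have hne1U : ∀ y ∈ U, ⟪n y, d1 Φ y⟫ = (fun _ : RR2 => (0:ℝ)) y := fun y hy => h.n_orth_d1 y hy
  have hne2U : ∀ y ∈ U, ⟪n y, d2 Φ y⟫ = (fun _ : RR2 => (0:ℝ)) y := fun y hy => h.n_orth_d2 y hy
  have hN1P : ⟪N1, P⟫ = 0 := by
    have h2 : ⟪N, E1⟫ + ⟪N1, P⟫ = 0 := hderivC n Φ 0 dn dΦ hnPhiU (1,0)
    have h3 : ⟪N, E1⟫ = 0 := h.n_orth_d1 x hx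
    linarith
  have hN2P : ⟪N2, P⟫ = 0 := by
    have h2 : ⟪N, E2⟫ + ⟪N2, P⟫ = 0 := hderivC n Φ 0 dn dΦ hnPhiU (0,1)
    have h3 : ⟪N, E2⟫ = 0 := h.n_orth_d2 x hx
    linarith
  have hN1N : ⟪N1, N⟫ = 0 := by
    have h2 : ⟪N, N1⟫ + ⟪N1, N⟫ = 0 := hderivC n n 1 dn dn hnnU (1,0)
    linarith [h2, icomm N N1]
  have hN2N : ⟪N2, N⟫ = 0 := by
    have h2 : ⟪N, N2⟫ + ⟪N2, N⟫ = 0 := hderivC n n 1 dn dn hnnU (0,1)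
    linarith [h2, icomm N N2]
  have hN1E1 : ⟪N1, E1⟫ = -a11 := by
    have h2 : ⟪N, E11⟫ + ⟪N1, E1⟫ = 0 := hderivC n (d1 Φ) 0 dn dΦ1 hne1U (1,0)
    rw [ha11] at h2; linarith
  have hN2E1 : ⟪N2, E1⟫ = -a12 := by
    have h2 : ⟪N, E21⟫ + ⟪N2, E1⟫ = 0 := hderivC n (d1 Φ) 0 dn dΦ1 hne1U (0,1)
    rw [ha12] at h2; linarith
  have hN1E2 : ⟪N1, E2⟫ = -a12 := by
    have h2 : ⟪N, E12⟫ + ⟪N1, E2⟫ = 0 := hderivC n (d2 Φ) 0 dn dΦ2 hne2U (1,0)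
    rw [ha12'] at h2; linarith
  have hN2E2 : ⟪N2, E2⟫ = -a22 := by
    have h2 : ⟪N, E22⟫ + ⟪N2, E2⟫ = 0 := hderivC n (d2 Φ) 0 dn dΦ2 hne2U (0,1)
    rw [ha22] at h2; linarith
  -- derivatives of the metric
  have hexpU : ∀ y ∈ U, ⟪d1 Φ y, d1 Φ y⟫ = (fun z => exp (lam z) * exp (lam z)) y := by
    intro y hy; rw [inner_norm, h.conf_norm1 y hy]
  have hexp2U : ∀ y ∈ U, ⟪d2 Φ y, d2 Φ y⟫ = (fun z => exp (lam z) * exp (lam z)) y := by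
    intro y hy; rw [inner_norm, h.conf_norm2 y hy]
  have hdL : ∀ v : RR2, fderiv ℝ (fun z => exp (lam z) * exp (lam z)) x v
      = 2 * s^2 * fderiv ℝ lam x v := by
    intro v
    have hde : DifferentiableAt ℝ (fun z => exp (lam z)) x := dlam.exp
    rw [fderiv_mul_apply' hde hde v]
    have heval : fderiv ℝ (fun z => exp (lam z)) x v = exp (lam x) * fderiv ℝ lam x v := by
      rw [fderiv_exp dlam]; simp
    rw [heval, ← hsdef]; ring
  have m111 : ⟪E11, E1⟫ = s^2 * l1 := by
    have h2 : ⟪E1, E11⟫ + ⟪E11, E1⟫ = 2 * s^2 * l1 := by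
      have h3 := inner_deriv_formula hU hx dΦ1 dΦ1 hexpU (1,0)
      rw [hdL] at h3; exact h3
    linarith [h2, icomm E1 E11]
  have m211 : ⟪E21, E1⟫ = s^2 * l2 := by
    have h2 : ⟪E1, E21⟫ + ⟪E21, E1⟫ = 2 * s^2 * l2 := by
      have h3 := inner_deriv_formula hU hx dΦ1 dΦ1 hexpU (0,1)
      rw [hdL] at h3; exact h3
    linarith [h2, icomm E1 E21]
  have m122 : ⟪E12, E2⟫ = s^2 * l1 := by
    have h2 : ⟪E2, E12⟫ + ⟪E12, E2⟫ = 2 * s^2 * l1 := by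
      have h3 := inner_deriv_formula hU hx dΦ2 dΦ2 hexp2U (1,0)
      rw [hdL] at h3; exact h3
    linarith [h2, icomm E2 E12]
  have m222 : ⟪E22, E2⟫ = s^2 * l2 := by
    have h2 : ⟪E2, E22⟫ + ⟪E22, E2⟫ = 2 * s^2 * l2 := by
      have h3 := inner_deriv_formula hU hx dΦ2 dΦ2 hexp2U (0,1)
      rw [hdL] at h3; exact h3
    linarith [h2, icomm E2 E22]
  have m212 : ⟪E21, E2⟫ = s^2 * l1 := by rw [← hsymmx]; exact m122
  have horthU : ∀ y ∈ U, ⟪d1 Φ y, d2 Φ y⟫ = (fun _ : RR2 => (0:ℝ)) y :=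
    fun y hy => h.conf_orth y hy
  have m112 : ⟪E11, E2⟫ = -(s^2 * l2) := by
    have h2 : ⟪E1, E12⟫ + ⟪E11, E2⟫ = 0 := hderivC (d1 Φ) (d2 Φ) 0 dΦ1 dΦ2 horthU (1,0)
    have h3 : ⟪E1, E12⟫ = s^2 * l2 := by rw [icomm E1 E12, hsymmx]; exact m211
    linarith
  have m221 : ⟪E22, E1⟫ = -(s^2 * l1) := by
    have h2 : ⟪E1, E22⟫ + ⟪E21, E2⟫ = 0 := hderivC (d1 Φ) (d2 Φ) 0 dΦ1 dΦ2 horthU (0,1)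
    have h3 : ⟪E1, E22⟫ = ⟪E22, E1⟫ := icomm E1 E22
    linarith [h2, h3, m212]
  -- third-derivative symmetries
  have T1 : d2 (d1 (d1 Φ)) x = d1 (d2 (d1 Φ)) x := (symm_d12 hU cΦ1 hx).symm
  have T2 : d1 (d2 (d2 Φ)) x = d2 (d2 (d1 Φ)) x := by
    have e1 : d1 (d2 (d2 Φ)) x = d2 (d1 (d2 Φ)) x := symm_d12 hU cΦ2 hx
    have e2 : fderiv ℝ (d1 (d2 Φ)) x = fderiv ℝ (d2 (d1 Φ)) x := fderiv_congr_on hU hsymm hx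
    rw [e1]
    show fderiv ℝ (d1 (d2 Φ)) x (0,1) = fderiv ℝ (d2 (d1 Φ)) x (0,1)
    rw [e2]
  -- Codazzi equations
  have p1 : ⟪N2, E11⟫ = -(a12*l1) + a22*l2 := by
    rw [hparse N2 E11, hN2P, hN2N, hN2E1, hN2E2, icomm E1 E11, icomm E2 E11, m111, m112]
    field_simp; ring
  have p2 : ⟪N1, E21⟫ = -(a11*l2) - a12*l1 := by
    rw [hparse N1 E21, hN1P, hN1N, hN1E1, hN1E2, icomm E1 E21, icomm E2 E21, m211, m212]
    field_simp; ring
  have p3 : ⟪N1, E22⟫ = a11*l1 - a12*l2 := by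
    rw [hparse N1 E22, hN1P, hN1N, hN1E1, hN1E2, icomm E1 E22, icomm E2 E22, m221, m222]
    field_simp; ring
  have p4 : ⟪N2, E21⟫ = -(a12*l2) - a22*l1 := by
    rw [hparse N2 E21, hN2P, hN2N, hN2E1, hN2E2, icomm E1 E21, icomm E2 E21, m211, m212]
    field_simp; ring
  have eI11d2 : d2s (fun y => I11 Φ n y) x = ⟪N, d2 (d1 (d1 Φ)) x⟫ + ⟪N2, E11⟫ := by
    show fderiv ℝ (fun y => ⟪n y, d1 (d1 Φ) y⟫) x (0,1) = _
    rw [fderiv_inner_apply ℝ dn dΦ11 (0,1)]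
    rfl
  have eI12d1 : d1s (fun y => I12 Φ n y) x = ⟪N, d1 (d2 (d1 Φ)) x⟫ + ⟪N1, E21⟫ := by
    show fderiv ℝ (fun y => ⟪n y, d2 (d1 Φ) y⟫) x (1,0) = _
    rw [fderiv_inner_apply ℝ dn dΦ21 (1,0)]
    rfl
  have eI22d1 : d1s (fun y => I22 Φ n y) x = ⟪N, d1 (d2 (d2 Φ)) x⟫ + ⟪N1, E22⟫ := by
    show fderiv ℝ (fun y => ⟪n y, d2 (d2 Φ) y⟫) x (1,0) = _
    rw [fderiv_inner_apply ℝ dn dΦ22 (1,0)]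
    rfl
  have eI12d2 : d2s (fun y => I12 Φ n y) x = ⟪N, d2 (d2 (d1 Φ)) x⟫ + ⟪N2, E21⟫ := by
    show fderiv ℝ (fun y => ⟪n y, d2 (d1 Φ) y⟫) x (0,1) = _
    rw [fderiv_inner_apply ℝ dn dΦ21 (0,1)]
    rfl
  have Cod1 : d2s (fun y => I11 Φ n y) x - d1s (fun y => I12 Φ n y) x = (a11 + a22) * l2 := by
    rw [eI11d2, eI12d1, T1, p1, p2]; ring
  have Cod2 : d1s (fun y => I22 Φ n y) x - d2s (fun y => I12 Φ n y) x = (a11 + a22) * l1 := by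
    rw [eI22d1, eI12d2, T2, p3, p4]; ring
  -- hypotheses as pointwise identities on U
  have hG : ∀ y ∈ U, I11 Φ n y + I22 Φ n y = 2 * exp (-(2*lam y)) * I011 Φ n y := by
    intro y hy
    have h2 : (1/2) * exp (-(2*lam y)) * (I11 Φ n y + I22 Φ n y)
        = exp (-(4*lam y)) * I011 Φ n y := hccms y hy
    have hA2 : exp (-(4*lam y)) = exp (-(2*lam y))^2 := by
      rw [sq, ← Real.exp_add]; congr 1; ring
    have hAy : exp (-(2*lam y)) ≠ 0 := (exp_pos _).ne'
    have h3 : exp (-(2*lam y)) * (I11 Φ n y + I22 Φ n y)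
        = exp (-(2*lam y)) * (2 * exp (-(2*lam y)) * I011 Φ n y) := by
      linear_combination 2*h2 + 2*(I011 Φ n y)*hA2
    exact mul_left_cancel₀ hAy h3
  have hI11U : ∀ y ∈ U, I11 Φ n y = (fun z => (1 + exp (-(2*lam z))) * I011 Φ n z) y := by
    intro y hy
    show I11 Φ n y = (1 + exp (-(2*lam y))) * I011 Φ n y
    have h1 := hG y hy
    have h2 : I011 Φ n y = (I11 Φ n y - I22 Φ n y)/2 := rfl
    linear_combination (1/2)*h1 - h2
  have hI22U : ∀ y ∈ U, I22 Φ n y = (fun z => (exp (-(2*lam z)) - 1) * I011 Φ n z) y := by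
    intro y hy
    show I22 Φ n y = (exp (-(2*lam y)) - 1) * I011 Φ n y
    have h1 := hG y hy
    have h2 : I011 Φ n y = (I11 Φ n y - I22 Φ n y)/2 := rfl
    linear_combination (1/2)*h1 + h2
  have hI12U : ∀ y ∈ U, I12 Φ n y = (fun z => -t * I011 Φ n z) y := fun y hy => hiso y hy
  -- differentiability of the pieces
  have dG : DifferentiableAt ℝ (fun y => I011 Φ n y) x := by
    show DifferentiableAt ℝ (fun y => (⟪n y, d1 (d1 Φ) y⟫ - ⟪n y, d2 (d2 Φ) y⟫) * (2:ℝ)⁻¹) x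
    exact ((dn.inner ℝ dΦ11).sub (dn.inner ℝ dΦ22)).mul_const ((2:ℝ)⁻¹)
  have dA2f : DifferentiableAt ℝ (fun y => exp (-(2*lam y))) x :=
    ((dlam.const_mul 2).neg).exp
  have dA4f : DifferentiableAt ℝ (fun y => exp (-(4*lam y))) x :=
    ((dlam.const_mul 4).neg).exp
  -- derivatives of the conformal factors
  have hdexp2 : ∀ v : RR2, fderiv ℝ (fun y => exp (-(2*lam y))) x v
      = -2 * A * fderiv ℝ lam x v := by
    intro v
    have hfun : (fun y => exp (-(2*lam y))) = (fun y => exp ((-2) * lam y)) := by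
      funext y; congr 1; ring
    rw [hfun, fderiv_exp_mul_s18 dlam (-2) v]
    have h1 : (-2:ℝ) * lam x = -(2*lam x) := by ring
    rw [h1, ← hAdef]
  have hdexp4 : ∀ v : RR2, fderiv ℝ (fun y => exp (-(4*lam y))) x v
      = -4 * A^2 * fderiv ℝ lam x v := by
    intro v
    have hfun : (fun y => exp (-(4*lam y))) = (fun y => exp ((-4) * lam y)) := by
      funext y; congr 1; ring
    rw [hfun, fderiv_exp_mul_s18 dlam (-4) v]
    have h1 : (-4:ℝ) * lam x = -(4*lam x) := by ring
    rw [h1, hB]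
  -- scalar abbreviations for the trace-free quantity and its derivatives
  set G0 := I011 Φ n x with hG0def
  set G1 := fderiv ℝ (fun y => I011 Φ n y) x (1,0) with hG1def
  set G2 := fderiv ℝ (fun y => I011 Φ n y) x (0,1) with hG2def
  -- derivatives of I11, I22, I12 expressed via G
  have eI11_2 : d2s (fun y => I11 Φ n y) x = (1+A)*G2 + G0*(-2*A*l2) := by
    show fderiv ℝ (fun y => I11 Φ n y) x (0,1) = _
    rw [fderiv_congr_on hU hI11U hx,
      fderiv_mul_apply' (f := fun z => 1 + exp (-(2*lam z))) ((differentiableAt_const (1:ℝ)).add dA2f) dG (0,1)]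
    have h1 : fderiv ℝ (fun z => 1 + exp (-(2*lam z))) x (0,1) = -2*A*l2 := by
      rw [fderiv_const_add]; exact hdexp2 (0,1)
    rw [h1]
  have eI22_1 : d1s (fun y => I22 Φ n y) x = (A-1)*G1 + G0*(-2*A*l1) := by
    show fderiv ℝ (fun y => I22 Φ n y) x (1,0) = _
    rw [fderiv_congr_on hU hI22U hx,
      fderiv_mul_apply' (f := fun z => exp (-(2*lam z)) - 1) (dA2f.sub (differentiableAt_const (1:ℝ))) dG (1,0)]
    have h1 : fderiv ℝ (fun z => exp (-(2*lam z)) - 1) x (1,0) = -2*A*l1 := by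
      rw [fderiv_sub_const]; exact hdexp2 (1,0)
    rw [h1]
  have eI12_1 : d1s (fun y => I12 Φ n y) x = -t * G1 := by
    show fderiv ℝ (fun y => I12 Φ n y) x (1,0) = _
    rw [fderiv_congr_on hU hI12U hx, fderiv_const_mul dG (-t)]
    simp [hG1def]
  have eI12_2 : d2s (fun y => I12 Φ n y) x = -t * G2 := by
    show fderiv ℝ (fun y => I12 Φ n y) x (0,1) = _
    rw [fderiv_congr_on hU hI12U hx, fderiv_const_mul dG (-t)]
    simp [hG2def]
  -- Codazzi in final scalar form
  have hSx : a11 + a22 = 2*A*G0 := hG x hx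
  have EC1 : (1+A)*G2 + G0*(-2*A*l2) - (-t * G1) = 2*A*G0*l2 := by
    rw [← eI11_2, ← eI12_1, Cod1, hSx]
  have EC2 : (A-1)*G1 + G0*(-2*A*l1) - (-t * G2) = 2*A*G0*l1 := by
    rw [← eI22_1, ← eI12_2, Cod2, hSx]
  -- the two goal derivatives
  have dF4 : DifferentiableAt ℝ (fun z => 1 + t^2 - exp (-(4*lam z))) x :=
    (differentiableAt_const _).sub dA4f
  have eLHS1 : d1s (fun y => (1 + t ^ 2 - exp (-(4 * lam y))) * I011 Φ n y) x
      = (1 + t^2 - A^2)*G1 + G0*(4*A^2*l1) := by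
    show fderiv ℝ (fun y => (1 + t ^ 2 - exp (-(4 * lam y))) * I011 Φ n y) x (1,0) = _
    rw [fderiv_mul_apply' dF4 dG (1,0)]
    have h1 : fderiv ℝ (fun z => 1 + t^2 - exp (-(4*lam z))) x (1,0) = 4*A^2*l1 := by
      rw [fderiv_fun_sub (differentiableAt_const _) dA4f]
      simp only [ContinuousLinearMap.sub_apply, fderiv_const_apply,
        ContinuousLinearMap.zero_apply]
      rw [hdexp4 (1,0)]; ring
    rw [h1, hB]
  have eLHS2 : d2s (fun y => (1 + t ^ 2 - exp (-(4 * lam y))) * I011 Φ n y) x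
      = (1 + t^2 - A^2)*G2 + G0*(4*A^2*l2) := by
    show fderiv ℝ (fun y => (1 + t ^ 2 - exp (-(4 * lam y))) * I011 Φ n y) x (0,1) = _
    rw [fderiv_mul_apply' dF4 dG (0,1)]
    have h1 : fderiv ℝ (fun z => 1 + t^2 - exp (-(4*lam z))) x (0,1) = 4*A^2*l2 := by
      rw [fderiv_fun_sub (differentiableAt_const _) dA4f]
      simp only [ContinuousLinearMap.sub_apply, fderiv_const_apply,
        ContinuousLinearMap.zero_apply]
      rw [hdexp4 (0,1)]; ring
    rw [h1, hB]
  have eR1 : d1s (fun y => exp (-(2 * lam y))) x = -2*A*l1 := hdexp2 (1,0)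
  have eR2 : d2s (fun y => exp (-(2 * lam y))) x = -2*A*l2 := hdexp2 (0,1)
  constructor
  · rw [eLHS1, eR1, eR2]
    linear_combination t*EC1 - (1+A)*EC2
  · rw [eLHS2, eR1, eR2]
    linear_combination (1-A)*EC1 + t*EC2
end
end

section
/- (Coordinate curves of axially symmetric data are planar circles.) Let U ⊆ ℝ² be open and Φ : U → S³ ⊂ ℝ⁴ a smooth conformal immersion into S³ with conformal factor e^λ and Gauss map n. Assume that on U: ∂_{x₁}λ ≡ 0 (the conformal factor depends only on x₂), n·∂²_{x₁x₂}Φ ≡ 0 (the coordinate directions are principal), and ∂_{x₁}( n·∂²_{x₁x₁}Φ ) ≡ 0. Then at every point of U, with I₁₁ := n·∂²_{x₁x₁}Φ: ∂³_{x₁x₁x₁}Φ = −( (∂_{x₂}λ)² + e^{−2λ} I₁₁² + e^{2λ} ) ∂_{x₁}Φ. In particular, along each curve x₂ = const, Φ satisfies a linear second-order ODE for ∂_{x₁}Φ with constant coefficient, so its second osculating plane is constant and the curve lies in a fixed 2-dimensional affine plane of ℝ⁴. -/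
noncomputable section

open Real MeasureTheory
open scoped ENNReal RealInnerProductSpace

section Helpers

variable {F : Type*} [NormedAddCommGroup F] [NormedSpace ℝ F]

lemma contDiffAt_pd {f : RR2 → F} {x : RR2} (hf : ContDiffAt ℝ (⊤:ℕ∞) f x) (v : RR2) :
    ContDiffAt ℝ (⊤:ℕ∞) (fun y => fderiv ℝ f y v) x := by
  have h1 : ContDiffAt ℝ (⊤:ℕ∞) (fderiv ℝ f) x := hf.fderiv_right (by norm_cast)
  exact (ContinuousLinearMap.apply ℝ F v).contDiff.contDiffAt.comp x h1

lemma pd_comm {f : RR2 → F} {x : RR2} (hf : ContDiffAt ℝ (⊤:ℕ∞) f x) (v w : RR2) :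
    fderiv ℝ (fun y => fderiv ℝ f y v) x w = fderiv ℝ (fun y => fderiv ℝ f y w) x v := by
  have hdiff : DifferentiableAt ℝ (fderiv ℝ f) x :=
    (hf.fderiv_right (m := ((⊤:ℕ∞):WithTop ℕ∞)) (by norm_cast)).differentiableAt (by norm_cast)
  have hsymm := hf.isSymmSndFDerivAt (by rw [minSmoothness_of_isRCLikeNormedField]; exact WithTop.coe_le_coe.mpr le_top)
  have hcomp : ∀ v : RR2, fderiv ℝ (fun y => fderiv ℝ f y v) x
      = (ContinuousLinearMap.apply ℝ F v).comp (fderiv ℝ (fderiv ℝ f) x) := by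
    intro v
    exact ((ContinuousLinearMap.apply ℝ F v).hasFDerivAt.comp x hdiff.hasFDerivAt).fderiv
  rw [hcomp v, hcomp w]
  exact hsymm w v

lemma pd_congr {f g : RR2 → F} {U : Set RR2} (hU : IsOpen U) {x : RR2} (hx : x ∈ U)
    (h : ∀ y ∈ U, f y = g y) : fderiv ℝ f x = fderiv ℝ g x :=
  Filter.EventuallyEq.fderiv_eq (Filter.eventually_of_mem (hU.mem_nhds hx) h)

lemma pd_of_eq_const {f : RR2 → F} {U : Set RR2} (hU : IsOpen U) {x : RR2} (hx : x ∈ U)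
    (c : F) (h : ∀ y ∈ U, f y = c) (v : RR2) : fderiv ℝ f x v = 0 := by
  rw [pd_congr hU hx h, fderiv_const_apply]
  rfl

lemma pd_exp2 {lam : RR2 → ℝ} {x : RR2} (hd : DifferentiableAt ℝ lam x) (v : RR2) :
    fderiv ℝ (fun y => Real.exp (lam y) * Real.exp (lam y)) x v
      = 2 * Real.exp (lam x) * Real.exp (lam x) * fderiv ℝ lam x v := by
  have h1 : HasFDerivAt lam (fderiv ℝ lam x) x := hd.hasFDerivAt
  have h2 := h1.exp
  have h3 := h2.fun_mul h2
  rw [h3.fderiv]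
  simp only [ContinuousLinearMap.add_apply, ContinuousLinearMap.smul_apply, smul_eq_mul]
  ring

end Helpers

lemma perp_frame_zero (e : Fin 4 → RR4) (he : Orthonormal ℝ e) {w : RR4}
    (hw : ∀ i, ⟪e i, w⟫ = 0) : w = 0 := by
  have hcard : Fintype.card (Fin 4) = Module.finrank ℝ RR4 := by
    simp [finrank_euclideanSpace]
  have hb := coe_basisOfLinearIndependentOfCardEqFinrank he.linearIndependent hcard
  set b := basisOfLinearIndependentOfCardEqFinrank he.linearIndependent hcard with hbdef
  have : ⟪w, w⟫ = 0 := by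
    nth_rewrite 1 [← b.sum_repr w]
    rw [sum_inner]
    simp only [hb, real_inner_smul_left, hw, mul_zero, Finset.sum_const_zero]
  exact inner_self_eq_zero.mp this

lemma frame_perp (P D1 D2 N : RR4) (l : ℝ)
    (hP : ⟪P, P⟫ = 1)
    (hD1 : ⟪D1, D1⟫ = exp l * exp l) (hD2 : ⟪D2, D2⟫ = exp l * exp l)
    (hN : ⟪N, N⟫ = 1)
    (h12 : ⟪D1, D2⟫ = 0) (hP1 : ⟪P, D1⟫ = 0) (hP2 : ⟪P, D2⟫ = 0)
    (hNP : ⟪N, P⟫ = 0) (hN1 : ⟪N, D1⟫ = 0) (hN2 : ⟪N, D2⟫ = 0)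
    {w : RR4} (h0 : ⟪P, w⟫ = 0) (h1 : ⟪D1, w⟫ = 0) (h2 : ⟪D2, w⟫ = 0)
    (h3 : ⟪N, w⟫ = 0) : w = 0 := by
  have hP1' : ⟪D1, P⟫ = 0 := by rw [real_inner_comm]; exact hP1
  have hP2' : ⟪D2, P⟫ = 0 := by rw [real_inner_comm]; exact hP2
  have h12' : ⟪D2, D1⟫ = 0 := by rw [real_inner_comm]; exact h12
  have hNP' : ⟪P, N⟫ = 0 := by rw [real_inner_comm]; exact hNP
  have hN1' : ⟪D1, N⟫ = 0 := by rw [real_inner_comm]; exact hN1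
  have hN2' : ⟪D2, N⟫ = 0 := by rw [real_inner_comm]; exact hN2
  apply perp_frame_zero ![P, exp (-l) • D1, exp (-l) • D2, N]
  · rw [orthonormal_iff_ite]
    intro i j
    fin_cases i <;> fin_cases j <;>
      simp [-PiLp.inner_apply, -inner_self_eq_norm_sq_to_K, real_inner_smul_left, real_inner_smul_right,
        hP, hD1, hD2, hN, h12, hP1, hP2, hNP, hN1, hN2, hP1', hP2', h12', hNP', hN1', hN2',
        Real.exp_neg]
  · intro i
    fin_cases i <;>
      simp [-PiLp.inner_apply, real_inner_smul_left, h0, h1, h2, h3]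
/-- **coordinate curves of axially symmetric data are planar circles.**
If a smooth conformal immersion `Φ : U → S³` has `∂_{x₁}λ ≡ 0`, `n·∂²_{x₁x₂}Φ ≡ 0` and
`∂_{x₁}(n·∂²_{x₁x₁}Φ) ≡ 0` on `U`, then
`∂³_{x₁x₁x₁}Φ = -((∂_{x₂}λ)² + e^{-2λ}I₁₁² + e^{2λ}) ∂_{x₁}Φ` on `U`; in particular each
curve `x₂ = const` lies in a fixed 2-plane of `ℝ⁴` and is a planar circle. -/
theorem axially_symmetric_coordinate_curves
    (U : Set RR2) (hU : IsOpen U)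
    (Φ : RR2 → RR4) (lam : RR2 → ℝ) (n : RR2 → RR4)
    (h : IsConformalImmersionS3 U Φ lam n)
    (hlam : ∀ x ∈ U, d1s lam x = 0)
    (hprincipal : ∀ x ∈ U, I12 Φ n x = 0)
    (hI11 : ∀ x ∈ U, d1s (I11 Φ n) x = 0) :
    ∀ x ∈ U,
      d1 (d1 (d1 Φ)) x
        = -((d2s lam x) ^ 2 + exp (-(2 * lam x)) * (I11 Φ n x) ^ 2
            + exp (2 * lam x)) • d1 Φ x := by
  obtain ⟨hΦS, hlamS, hnS, hsph, horth0, hnm1, hnm2, hnn0, hnPhi0, hnd10, hnd20, -⟩ := h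
  -- pointwise smoothness and differentiability
  have sΦ : ∀ x ∈ U, ContDiffAt ℝ (⊤:ℕ∞) Φ x := fun x hx => hΦS.contDiffAt (hU.mem_nhds hx)
  have slam : ∀ x ∈ U, ContDiffAt ℝ (⊤:ℕ∞) lam x := fun x hx => hlamS.contDiffAt (hU.mem_nhds hx)
  have sn : ∀ x ∈ U, ContDiffAt ℝ (⊤:ℕ∞) n x := fun x hx => hnS.contDiffAt (hU.mem_nhds hx)
  have dΦ : ∀ x ∈ U, DifferentiableAt ℝ Φ x := fun x hx =>
    (sΦ x hx).differentiableAt (by norm_cast)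
  have dlam : ∀ x ∈ U, DifferentiableAt ℝ lam x := fun x hx =>
    (slam x hx).differentiableAt (by norm_cast)
  have dn : ∀ x ∈ U, DifferentiableAt ℝ n x := fun x hx =>
    (sn x hx).differentiableAt (by norm_cast)
  have dD1 : ∀ x ∈ U, DifferentiableAt ℝ (fun y => fderiv ℝ Φ y (1,0)) x := fun x hx =>
    (contDiffAt_pd (sΦ x hx) (1,0)).differentiableAt (by norm_cast)
  have dD2 : ∀ x ∈ U, DifferentiableAt ℝ (fun y => fderiv ℝ Φ y (0,1)) x := fun x hx =>
    (contDiffAt_pd (sΦ x hx) (0,1)).differentiableAt (by norm_cast)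
  have dD11 : ∀ x ∈ U,
      DifferentiableAt ℝ (fun y => fderiv ℝ (fun z => fderiv ℝ Φ z (1,0)) y (1,0)) x :=
    fun x hx =>
    (contDiffAt_pd (contDiffAt_pd (sΦ x hx) (1,0)) (1,0)).differentiableAt (by norm_cast)
  have dD2lam : ∀ x ∈ U, DifferentiableAt ℝ (fun y => fderiv ℝ lam y (0,1)) x := fun x hx =>
    (contDiffAt_pd (slam x hx) (0,1)).differentiableAt (by norm_cast)
  have dc3 : ∀ x ∈ U,
      DifferentiableAt ℝ (fun y => ⟪n y, fderiv ℝ (fun z => fderiv ℝ Φ z (1,0)) y (1,0)⟫) x :=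
    fun x hx => (dn x hx).inner ℝ (dD11 x hx)
  -- basic inner product identities
  have hPP : ∀ x ∈ U, ⟪Φ x, Φ x⟫ = 1 := fun x hx => by
    rw [real_inner_self_eq_norm_mul_norm,
      show ‖Φ x‖ = 1 from hsph x hx]; norm_num
  have h11 : ∀ x ∈ U, ⟪fderiv ℝ Φ x (1,0), fderiv ℝ Φ x (1,0)⟫
      = exp (lam x) * exp (lam x) := fun x hx => by
    rw [real_inner_self_eq_norm_mul_norm,
      show ‖fderiv ℝ Φ x (1,0)‖ = exp (lam x) from hnm1 x hx]
  have h22 : ∀ x ∈ U, ⟪fderiv ℝ Φ x (0,1), fderiv ℝ Φ x (0,1)⟫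
      = exp (lam x) * exp (lam x) := fun x hx => by
    rw [real_inner_self_eq_norm_mul_norm,
      show ‖fderiv ℝ Φ x (0,1)‖ = exp (lam x) from hnm2 x hx]
  have hNN : ∀ x ∈ U, ⟪n x, n x⟫ = 1 := fun x hx => by
    rw [real_inner_self_eq_norm_mul_norm,
      show ‖n x‖ = 1 from hnn0 x hx]; norm_num
  have h12 : ∀ x ∈ U, ⟪fderiv ℝ Φ x (1,0), fderiv ℝ Φ x (0,1)⟫ = 0 := fun x hx => horth0 x hx
  have hNP : ∀ x ∈ U, ⟪n x, Φ x⟫ = 0 := hnPhi0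
  have hN1 : ∀ x ∈ U, ⟪n x, fderiv ℝ Φ x (1,0)⟫ = 0 := fun x hx => hnd10 x hx
  have hN2 : ∀ x ∈ U, ⟪n x, fderiv ℝ Φ x (0,1)⟫ = 0 := fun x hx => hnd20 x hx
  have hlam1 : ∀ x ∈ U, fderiv ℝ lam x (1,0) = 0 := fun x hx => hlam x hx
  have hprin : ∀ x ∈ U, ⟪n x, fderiv ℝ (fun z => fderiv ℝ Φ z (1,0)) x (0,1)⟫ = 0 :=
    fun x hx => hprincipal x hx
  -- Schwarz symmetry for Φ and lam
  have schPhi : ∀ x ∈ U, fderiv ℝ (fun y => fderiv ℝ Φ y (0,1)) x (1,0)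
      = fderiv ℝ (fun y => fderiv ℝ Φ y (1,0)) x (0,1) := fun x hx =>
    pd_comm (sΦ x hx) (0,1) (1,0)
  -- first derivatives of the unit-norm relation
  have A1 : ∀ x ∈ U, ⟪Φ x, fderiv ℝ Φ x (1,0)⟫ = 0 := by
    intro x hx
    have h0 : fderiv ℝ (fun y => ⟪Φ y, Φ y⟫) x (1,0) = 0 :=
      pd_of_eq_const hU hx 1 hPP (1,0)
    rw [fderiv_inner_apply ℝ (dΦ x hx) (dΦ x hx)] at h0
    linarith [real_inner_comm (Φ x) (fderiv ℝ Φ x (1,0))]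
  have A2 : ∀ x ∈ U, ⟪Φ x, fderiv ℝ Φ x (0,1)⟫ = 0 := by
    intro x hx
    have h0 : fderiv ℝ (fun y => ⟪Φ y, Φ y⟫) x (0,1) = 0 :=
      pd_of_eq_const hU hx 1 hPP (0,1)
    rw [fderiv_inner_apply ℝ (dΦ x hx) (dΦ x hx)] at h0
    linarith [real_inner_comm (Φ x) (fderiv ℝ Φ x (0,1))]
  -- second derivative inner products with Φ
  have B1 : ∀ x ∈ U, ⟪Φ x, fderiv ℝ (fun z => fderiv ℝ Φ z (1,0)) x (1,0)⟫
      = -(exp (lam x) * exp (lam x)) := by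
    intro x hx
    have h0 : fderiv ℝ (fun y => ⟪Φ y, fderiv ℝ Φ y (1,0)⟫) x (1,0) = 0 :=
      pd_of_eq_const hU hx 0 A1 (1,0)
    rw [fderiv_inner_apply ℝ (dΦ x hx) (dD1 x hx)] at h0
    have h1 := h11 x hx
    linarith
  have B2 : ∀ x ∈ U, ⟪Φ x, fderiv ℝ (fun z => fderiv ℝ Φ z (1,0)) x (0,1)⟫ = 0 := by
    intro x hx
    have h0 : fderiv ℝ (fun y => ⟪Φ y, fderiv ℝ Φ y (1,0)⟫) x (0,1) = 0 :=
      pd_of_eq_const hU hx 0 A1 (0,1)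
    rw [fderiv_inner_apply ℝ (dΦ x hx) (dD1 x hx)] at h0
    have h2 : ⟪fderiv ℝ Φ x (0,1), fderiv ℝ Φ x (1,0)⟫ = 0 := by
      rw [real_inner_comm]; exact h12 x hx
    linarith
  -- derivatives of |∂₁Φ|² = e^{2λ}
  have C12 : ∀ x ∈ U, ∀ v : RR2,
      2 * ⟪fderiv ℝ Φ x (1,0), fderiv ℝ (fun z => fderiv ℝ Φ z (1,0)) x v⟫
        = 2 * exp (lam x) * exp (lam x) * fderiv ℝ lam x v := by
    intro x hx v
    have h0 : fderiv ℝ (fun y => ⟪fderiv ℝ Φ y (1,0), fderiv ℝ Φ y (1,0)⟫) x v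
        = fderiv ℝ (fun y => exp (lam y) * exp (lam y)) x v := by
      rw [pd_congr hU hx h11]
    rw [fderiv_inner_apply ℝ (dD1 x hx) (dD1 x hx), pd_exp2 (dlam x hx)] at h0
    linarith [real_inner_comm (fderiv ℝ Φ x (1,0))
      (fderiv ℝ (fun y => fderiv ℝ Φ y (1,0)) x v)]
  have C1v : ∀ x ∈ U,
      ⟪fderiv ℝ Φ x (1,0), fderiv ℝ (fun z => fderiv ℝ Φ z (1,0)) x (1,0)⟫ = 0 := by
    intro x hx
    have := C12 x hx (1,0)
    rw [hlam1 x hx] at this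
    linarith
  have C2v : ∀ x ∈ U,
      ⟪fderiv ℝ Φ x (1,0), fderiv ℝ (fun z => fderiv ℝ Φ z (1,0)) x (0,1)⟫
        = exp (lam x) * exp (lam x) * fderiv ℝ lam x (0,1) := by
    intro x hx
    have := C12 x hx (0,1)
    linarith
  -- derivative of |∂₂Φ|² = e^{2λ} in x₁
  have E1v : ∀ x ∈ U,
      ⟪fderiv ℝ Φ x (0,1), fderiv ℝ (fun z => fderiv ℝ Φ z (1,0)) x (0,1)⟫ = 0 := by
    intro x hx
    have h0 : fderiv ℝ (fun y => ⟪fderiv ℝ Φ y (0,1), fderiv ℝ Φ y (0,1)⟫) x (1,0)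
        = fderiv ℝ (fun y => exp (lam y) * exp (lam y)) x (1,0) := by
      rw [pd_congr hU hx h22]
    rw [fderiv_inner_apply ℝ (dD2 x hx) (dD2 x hx), pd_exp2 (dlam x hx), hlam1 x hx] at h0
    rw [schPhi x hx] at h0
    linarith [real_inner_comm (fderiv ℝ Φ x (0,1))
      (fderiv ℝ (fun y => fderiv ℝ Φ y (1,0)) x (0,1))]
  -- derivative of ⟪∂₁Φ, ∂₂Φ⟫ = 0 in x₁
  have Dv : ∀ x ∈ U,
      ⟪fderiv ℝ Φ x (0,1), fderiv ℝ (fun z => fderiv ℝ Φ z (1,0)) x (1,0)⟫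
        = -(exp (lam x) * exp (lam x) * fderiv ℝ lam x (0,1)) := by
    intro x hx
    have h0 : fderiv ℝ (fun y => ⟪fderiv ℝ Φ y (1,0), fderiv ℝ Φ y (0,1)⟫) x (1,0) = 0 :=
      pd_of_eq_const hU hx 0 h12 (1,0)
    rw [fderiv_inner_apply ℝ (dD1 x hx) (dD2 x hx)] at h0
    rw [schPhi x hx] at h0
    have hc2 := C2v x hx
    have hcomm : ⟪fderiv ℝ (fun y => fderiv ℝ Φ y (1,0)) x (1,0), fderiv ℝ Φ x (0,1)⟫
        = ⟪fderiv ℝ Φ x (0,1), fderiv ℝ (fun y => fderiv ℝ Φ y (1,0)) x (1,0)⟫ :=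
      real_inner_comm _ _
    rw [hcomm] at h0
    linarith
  -- derivatives of the Gauss map relations
  have N1 : ∀ x ∈ U, ⟪fderiv ℝ n x (1,0), Φ x⟫ = 0 := by
    intro x hx
    have h0 : fderiv ℝ (fun y => ⟪n y, Φ y⟫) x (1,0) = 0 :=
      pd_of_eq_const hU hx 0 hNP (1,0)
    rw [fderiv_inner_apply ℝ (dn x hx) (dΦ x hx)] at h0
    have := hN1 x hx
    linarith
  have N2 : ∀ x ∈ U, ⟪fderiv ℝ n x (1,0), fderiv ℝ Φ x (1,0)⟫
      = -⟪n x, fderiv ℝ (fun z => fderiv ℝ Φ z (1,0)) x (1,0)⟫ := by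
    intro x hx
    have h0 : fderiv ℝ (fun y => ⟪n y, fderiv ℝ Φ y (1,0)⟫) x (1,0) = 0 :=
      pd_of_eq_const hU hx 0 hN1 (1,0)
    rw [fderiv_inner_apply ℝ (dn x hx) (dD1 x hx)] at h0
    linarith
  have N3 : ∀ x ∈ U, ⟪fderiv ℝ n x (1,0), fderiv ℝ Φ x (0,1)⟫ = 0 := by
    intro x hx
    have h0 : fderiv ℝ (fun y => ⟪n y, fderiv ℝ Φ y (0,1)⟫) x (1,0) = 0 :=
      pd_of_eq_const hU hx 0 hN2 (1,0)
    rw [fderiv_inner_apply ℝ (dn x hx) (dD2 x hx)] at h0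
    rw [schPhi x hx] at h0
    have := hprin x hx
    linarith
  have N4 : ∀ x ∈ U, ⟪n x, fderiv ℝ n x (1,0)⟫ = 0 := by
    intro x hx
    have h0 : fderiv ℝ (fun y => ⟪n y, n y⟫) x (1,0) = 0 :=
      pd_of_eq_const hU hx 1 hNN (1,0)
    rw [fderiv_inner_apply ℝ (dn x hx) (dn x hx)] at h0
    linarith [real_inner_comm (n x) (fderiv ℝ n x (1,0))]
  -- commuted versions
  have A1c : ∀ x ∈ U, ⟪fderiv ℝ Φ x (1,0), Φ x⟫ = 0 := fun x hx => by
    rw [real_inner_comm]; exact A1 x hx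
  have A2c : ∀ x ∈ U, ⟪fderiv ℝ Φ x (0,1), Φ x⟫ = 0 := fun x hx => by
    rw [real_inner_comm]; exact A2 x hx
  have hNPc : ∀ x ∈ U, ⟪Φ x, n x⟫ = 0 := fun x hx => by
    rw [real_inner_comm]; exact hNP x hx
  have hN1c : ∀ x ∈ U, ⟪fderiv ℝ Φ x (1,0), n x⟫ = 0 := fun x hx => by
    rw [real_inner_comm]; exact hN1 x hx
  have hN2c : ∀ x ∈ U, ⟪fderiv ℝ Φ x (0,1), n x⟫ = 0 := fun x hx => by
    rw [real_inner_comm]; exact hN2 x hx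
  have h12c : ∀ x ∈ U, ⟪fderiv ℝ Φ x (0,1), fderiv ℝ Φ x (1,0)⟫ = 0 := fun x hx => by
    rw [real_inner_comm]; exact h12 x hx
  -- P2 : ∂₁∂₂Φ = (∂₂λ) ∂₁Φ
  have P2 : ∀ x ∈ U, fderiv ℝ (fun z => fderiv ℝ Φ z (1,0)) x (0,1)
      = (fderiv ℝ lam x (0,1)) • fderiv ℝ Φ x (1,0) := by
    intro x hx
    have e0 : ⟪Φ x, fderiv ℝ (fun z => fderiv ℝ Φ z (1,0)) x (0,1)
        - (fderiv ℝ lam x (0,1)) • fderiv ℝ Φ x (1,0)⟫ = 0 := by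
      rw [inner_sub_right, real_inner_smul_right, B2 x hx, A1 x hx]; ring
    have e1 : ⟪fderiv ℝ Φ x (1,0), fderiv ℝ (fun z => fderiv ℝ Φ z (1,0)) x (0,1)
        - (fderiv ℝ lam x (0,1)) • fderiv ℝ Φ x (1,0)⟫ = 0 := by
      rw [inner_sub_right, real_inner_smul_right, C2v x hx, h11 x hx]; ring
    have e2 : ⟪fderiv ℝ Φ x (0,1), fderiv ℝ (fun z => fderiv ℝ Φ z (1,0)) x (0,1)
        - (fderiv ℝ lam x (0,1)) • fderiv ℝ Φ x (1,0)⟫ = 0 := by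
      rw [inner_sub_right, real_inner_smul_right, E1v x hx, h12c x hx]; ring
    have e3 : ⟪n x, fderiv ℝ (fun z => fderiv ℝ Φ z (1,0)) x (0,1)
        - (fderiv ℝ lam x (0,1)) • fderiv ℝ Φ x (1,0)⟫ = 0 := by
      rw [inner_sub_right, real_inner_smul_right, hprin x hx, hN1 x hx]; ring
    exact sub_eq_zero.mp (frame_perp (Φ x) (fderiv ℝ Φ x (1,0)) (fderiv ℝ Φ x (0,1)) (n x)
      (lam x) (hPP x hx) (h11 x hx) (h22 x hx) (hNN x hx) (h12 x hx) (A1 x hx) (A2 x hx)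
      (hNP x hx) (hN1 x hx) (hN2 x hx) e0 e1 e2 e3)
  -- P1 : ∂₁∂₁Φ = -e^{2λ}Φ - (∂₂λ)∂₂Φ + I₁₁ n
  have P1 : ∀ x ∈ U, fderiv ℝ (fun z => fderiv ℝ Φ z (1,0)) x (1,0)
      = (-(exp (lam x) * exp (lam x))) • Φ x
        + (-(fderiv ℝ lam x (0,1))) • fderiv ℝ Φ x (0,1)
        + ⟪n x, fderiv ℝ (fun z => fderiv ℝ Φ z (1,0)) x (1,0)⟫ • n x := by
    intro x hx
    have e0 : ⟪Φ x, fderiv ℝ (fun z => fderiv ℝ Φ z (1,0)) x (1,0)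
        - ((-(exp (lam x) * exp (lam x))) • Φ x
          + (-(fderiv ℝ lam x (0,1))) • fderiv ℝ Φ x (0,1)
          + ⟪n x, fderiv ℝ (fun z => fderiv ℝ Φ z (1,0)) x (1,0)⟫ • n x)⟫ = 0 := by
      rw [inner_sub_right, inner_add_right, inner_add_right, real_inner_smul_right,
        real_inner_smul_right, real_inner_smul_right, B1 x hx, hPP x hx, A2 x hx, hNPc x hx]
      ring
    have e1 : ⟪fderiv ℝ Φ x (1,0), fderiv ℝ (fun z => fderiv ℝ Φ z (1,0)) x (1,0)
        - ((-(exp (lam x) * exp (lam x))) • Φ x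
          + (-(fderiv ℝ lam x (0,1))) • fderiv ℝ Φ x (0,1)
          + ⟪n x, fderiv ℝ (fun z => fderiv ℝ Φ z (1,0)) x (1,0)⟫ • n x)⟫ = 0 := by
      rw [inner_sub_right, inner_add_right, inner_add_right, real_inner_smul_right,
        real_inner_smul_right, real_inner_smul_right, C1v x hx, A1c x hx, h12 x hx, hN1c x hx]
      ring
    have e2 : ⟪fderiv ℝ Φ x (0,1), fderiv ℝ (fun z => fderiv ℝ Φ z (1,0)) x (1,0)
        - ((-(exp (lam x) * exp (lam x))) • Φ x
          + (-(fderiv ℝ lam x (0,1))) • fderiv ℝ Φ x (0,1)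
          + ⟪n x, fderiv ℝ (fun z => fderiv ℝ Φ z (1,0)) x (1,0)⟫ • n x)⟫ = 0 := by
      rw [inner_sub_right, inner_add_right, inner_add_right, real_inner_smul_right,
        real_inner_smul_right, real_inner_smul_right, Dv x hx, A2c x hx, h22 x hx, hN2c x hx]
      ring
    have e3 : ⟪n x, fderiv ℝ (fun z => fderiv ℝ Φ z (1,0)) x (1,0)
        - ((-(exp (lam x) * exp (lam x))) • Φ x
          + (-(fderiv ℝ lam x (0,1))) • fderiv ℝ Φ x (0,1)
          + ⟪n x, fderiv ℝ (fun z => fderiv ℝ Φ z (1,0)) x (1,0)⟫ • n x)⟫ = 0 := by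
      rw [inner_sub_right, inner_add_right, inner_add_right, real_inner_smul_right,
        real_inner_smul_right, real_inner_smul_right, hNP x hx, hN2 x hx, hNN x hx]
      ring
    exact sub_eq_zero.mp (frame_perp (Φ x) (fderiv ℝ Φ x (1,0)) (fderiv ℝ Φ x (0,1)) (n x)
      (lam x) (hPP x hx) (h11 x hx) (h22 x hx) (hNN x hx) (h12 x hx) (A1 x hx) (A2 x hx)
      (hNP x hx) (hN1 x hx) (hN2 x hx) e0 e1 e2 e3)
  -- P3 : ∂₁n = -e^{-2λ} I₁₁ ∂₁Φ
  have P3 : ∀ x ∈ U, fderiv ℝ n x (1,0)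
      = (-(exp (-(2 * lam x)) * ⟪n x, fderiv ℝ (fun z => fderiv ℝ Φ z (1,0)) x (1,0)⟫))
        • fderiv ℝ Φ x (1,0) := by
    intro x hx
    have hexp2 : exp (-(2 * lam x)) * (exp (lam x) * exp (lam x)) = 1 := by
      rw [← Real.exp_add, ← Real.exp_add,
        show -(2 * lam x) + (lam x + lam x) = 0 by ring, Real.exp_zero]
    have N1c : ⟪Φ x, fderiv ℝ n x (1,0)⟫ = 0 := by
      rw [real_inner_comm]; exact N1 x hx
    have N2c : ⟪fderiv ℝ Φ x (1,0), fderiv ℝ n x (1,0)⟫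
        = -⟪n x, fderiv ℝ (fun z => fderiv ℝ Φ z (1,0)) x (1,0)⟫ := by
      rw [real_inner_comm]; exact N2 x hx
    have N3c : ⟪fderiv ℝ Φ x (0,1), fderiv ℝ n x (1,0)⟫ = 0 := by
      rw [real_inner_comm]; exact N3 x hx
    have e0 : ⟪Φ x, fderiv ℝ n x (1,0)
        - (-(exp (-(2 * lam x)) * ⟪n x, fderiv ℝ (fun z => fderiv ℝ Φ z (1,0)) x (1,0)⟫))
          • fderiv ℝ Φ x (1,0)⟫ = 0 := by
      rw [inner_sub_right, real_inner_smul_right, N1c, A1 x hx]; ring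
    have e1 : ⟪fderiv ℝ Φ x (1,0), fderiv ℝ n x (1,0)
        - (-(exp (-(2 * lam x)) * ⟪n x, fderiv ℝ (fun z => fderiv ℝ Φ z (1,0)) x (1,0)⟫))
          • fderiv ℝ Φ x (1,0)⟫ = 0 := by
      rw [inner_sub_right, real_inner_smul_right, N2c, h11 x hx]
      linear_combination (⟪n x, fderiv ℝ (fun z => fderiv ℝ Φ z (1,0)) x (1,0)⟫) * hexp2
    have e2 : ⟪fderiv ℝ Φ x (0,1), fderiv ℝ n x (1,0)
        - (-(exp (-(2 * lam x)) * ⟪n x, fderiv ℝ (fun z => fderiv ℝ Φ z (1,0)) x (1,0)⟫))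
          • fderiv ℝ Φ x (1,0)⟫ = 0 := by
      rw [inner_sub_right, real_inner_smul_right, N3c, h12c x hx]; ring
    have e3 : ⟪n x, fderiv ℝ n x (1,0)
        - (-(exp (-(2 * lam x)) * ⟪n x, fderiv ℝ (fun z => fderiv ℝ Φ z (1,0)) x (1,0)⟫))
          • fderiv ℝ Φ x (1,0)⟫ = 0 := by
      rw [inner_sub_right, real_inner_smul_right, N4 x hx, hN1 x hx]; ring
    exact sub_eq_zero.mp (frame_perp (Φ x) (fderiv ℝ Φ x (1,0)) (fderiv ℝ Φ x (0,1)) (n x)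
      (lam x) (hPP x hx) (h11 x hx) (h22 x hx) (hNN x hx) (h12 x hx) (A1 x hx) (A2 x hx)
      (hNP x hx) (hN1 x hx) (hN2 x hx) e0 e1 e2 e3)
  -- final assembly
  intro x hx
  show fderiv ℝ (fun y => fderiv ℝ (fun z => fderiv ℝ Φ z (1,0)) y (1,0)) x (1,0)
      = -((fderiv ℝ lam x (0,1)) ^ 2
          + exp (-(2 * lam x)) * ⟪n x, fderiv ℝ (fun z => fderiv ℝ Φ z (1,0)) x (1,0)⟫ ^ 2
          + exp (2 * lam x)) • fderiv ℝ Φ x (1,0)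
  have hdc1 : DifferentiableAt ℝ (fun y => -(exp (lam y) * exp (lam y))) x :=
    (((dlam x hx).exp).mul ((dlam x hx).exp)).neg
  have hdc2 : DifferentiableAt ℝ (fun y => -(fderiv ℝ lam y (0,1))) x := (dD2lam x hx).neg
  have hg1 : DifferentiableAt ℝ (fun y => (-(exp (lam y) * exp (lam y))) • Φ y) x :=
    hdc1.smul (dΦ x hx)
  have hg2 : DifferentiableAt ℝ
      (fun y => (-(fderiv ℝ lam y (0,1))) • fderiv ℝ Φ y (0,1)) x :=
    hdc2.smul (dD2 x hx)
  have hg3 : DifferentiableAt ℝ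
      (fun y => ⟪n y, fderiv ℝ (fun z => fderiv ℝ Φ z (1,0)) y (1,0)⟫ • n y) x :=
    (dc3 x hx).smul (dn x hx)
  have step1 : fderiv ℝ (fun y => fderiv ℝ (fun z => fderiv ℝ Φ z (1,0)) y (1,0)) x
      = fderiv ℝ (fun y => (-(exp (lam y) * exp (lam y))) • Φ y
          + (-(fderiv ℝ lam y (0,1))) • fderiv ℝ Φ y (0,1)
          + ⟪n y, fderiv ℝ (fun z => fderiv ℝ Φ z (1,0)) y (1,0)⟫ • n y) x :=
    pd_congr hU hx P1
  have hc1v : fderiv ℝ (fun y => -(exp (lam y) * exp (lam y))) x (1,0) = 0 := by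
    rw [fderiv_fun_neg, ContinuousLinearMap.neg_apply, pd_exp2 (dlam x hx), hlam1 x hx]; ring
  have hc2v : fderiv ℝ (fun y => -(fderiv ℝ lam y (0,1))) x (1,0) = 0 := by
    rw [fderiv_fun_neg, ContinuousLinearMap.neg_apply, pd_comm (slam x hx) (0,1) (1,0),
      pd_of_eq_const hU hx 0 hlam1 (0,1)]
    ring
  have hc3v : fderiv ℝ
      (fun y => ⟪n y, fderiv ℝ (fun z => fderiv ℝ Φ z (1,0)) y (1,0)⟫) x (1,0) = 0 :=
    hI11 x hx
  have hD2v : fderiv ℝ (fun y => fderiv ℝ Φ y (0,1)) x (1,0)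
      = (fderiv ℝ lam x (0,1)) • fderiv ℝ Φ x (1,0) := by
    rw [schPhi x hx]; exact P2 x hx
  have hexpsq : exp (2 * lam x) = exp (lam x) * exp (lam x) := by
    rw [two_mul, Real.exp_add]
  rw [step1, fderiv_fun_add (hg1.fun_add hg2) hg3, fderiv_fun_add hg1 hg2,
    fderiv_fun_smul hdc1 (dΦ x hx), fderiv_fun_smul hdc2 (dD2 x hx),
    fderiv_fun_smul (dc3 x hx) (dn x hx)]
  simp only [ContinuousLinearMap.add_apply, ContinuousLinearMap.coe_smul', Pi.smul_apply,
    ContinuousLinearMap.smulRight_apply]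
  rw [hc1v, hc2v, hc3v, hD2v, P3 x hx, hexpsq]
  simp only [zero_smul, add_zero, smul_smul]
  module
end
end
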